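/- arXiv:1507.08456 — 4 statements merged into one kernel-verified Lean document; each statement's English description precedes it below -/
import Mathlib

section
/- Let r, t, t' be positive integers with 11 ≤ t ≤ t' ≤ 2t − 2, and let c be a nonnegative integer with t ≥ 8r + 4c + 2. Then the complete bipartite graph K_{t,t'} is (r, c)-locally Eulerian. -/
set_option linter.unusedSectionVars false
set_option linter.unusedVariables false
set_option maxHeartbeats 1000000


open SimpleGraph

/-- A set of edges (as `Sym2 V`) is a matching: pairwise vertex-disjoint. -/
def IsMatchingSet {V : Type*} (M : Finset (Sym2 V)) : Prop :=
  ∀ e ∈ M, ∀ f ∈ M, e ≠ f → ∀ v : V, v ∈ e → v ∉ f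

/-- The matching Kneser graph `KG(G, rK₂)`: vertices are the matchings of size `r` in `G`,
two of them adjacent iff they are edge-disjoint. -/
def matchingKG {V : Type*} (G : SimpleGraph V) (r : ℕ) :
    SimpleGraph {M : Finset (Sym2 V) // ↑M ⊆ G.edgeSet ∧ IsMatchingSet M ∧ M.card = r} where
  Adj A B := Disjoint A.1 B.1 ∧ A ≠ B
  symm := ⟨fun _ _ h => ⟨h.1.symm, Ne.symm h.2⟩⟩
  loopless := ⟨fun _ h => h.2 rfl⟩

/-- `ex(G, rK₂)`: the maximum number of edges of a spanning subgraph of `G`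
containing no matching of size `r`. -/
noncomputable def exMatching {V : Type*} (G : SimpleGraph V) (r : ℕ) : ℕ :=
  sSup {k | ∃ E' : Finset (Sym2 V), ↑E' ⊆ G.edgeSet ∧
    (∀ M ⊆ E', IsMatchingSet M → M.card ≠ r) ∧ E'.card = k}

/-- A graph `H` is `(r, c)`-locally Eulerian if there are pairwise edge-disjoint
subgraphs `K v` (one for each vertex `v`) such that each `K v` is connected, has at
least one edge, all its degrees are even, contains `v`, and every vertex `u ≠ v` of it
satisfies `deg_{K v}(v) ≥ (r−1)·deg_{K v}(u) + c`. -/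
def LocallyEulerian {W : Type*} (H : SimpleGraph W) (r c : ℕ) : Prop :=
  ∃ K : W → H.Subgraph,
    (∀ v w : W, v ≠ w → Disjoint (K v).edgeSet (K w).edgeSet) ∧
    ∀ v : W,
      (K v).coe.Connected ∧
      (K v).edgeSet.Nonempty ∧
      (∀ u ∈ (K v).verts, Even (((K v).neighborSet u).ncard)) ∧
      v ∈ (K v).verts ∧
      (∀ u ∈ (K v).verts, u ≠ v →
        (r - 1) * ((K v).neighborSet u).ncard + c ≤ ((K v).neighborSet v).ncard)
section Aux


lemma modeq_false {n a b : ℕ} (h : a ≡ b [MOD n]) (h1 : a < b) (h2 : b < a + n) : False := by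
  have hd : n ∣ b - a := (Nat.modEq_iff_dvd' h1.le).mp h
  have h3 := Nat.le_of_dvd (by omega) hd
  omega

lemma modeq_eq {n a b : ℕ} (h : a ≡ b [MOD n]) (h1 : a ≤ b) (h2 : b < a + n) : a = b := by
  have hd : n ∣ b - a := (Nat.modEq_iff_dvd' h1).mp h
  have h3 : b - a = 0 := Nat.eq_zero_of_dvd_of_lt hd (by omega)
  omega

lemma modeq_eq' {n a b : ℕ} (h : a ≡ b [MOD n]) (ha : a < n) (hb : b < n) : a = b := by
  rcases le_total a b with hle | hle
  · exact modeq_eq h hle (by omega)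
  · exact (modeq_eq h.symm hle (by omega)).symm

lemma add_mod_inj {n a b c : ℕ} (hb : b < n) (hc : c < n) (h : (a + b) % n = (a + c) % n) : b = c :=
  modeq_eq' (Nat.ModEq.add_left_cancel' a h) hb hc

/-- square scheme edge predicate -/
def sqE (k n i x y : ℕ) : Prop :=
  (x = i ∧ ∃ s, 1 ≤ s ∧ s ≤ 2*k ∧ y = (i + s) % n) ∨
  (∃ j, j < k ∧ ∃ e, (e = 1 ∨ e = 2) ∧
     x = (i + (n - (4*(k-1-j)+2))) % n ∧ y = (i + 2*j + e) % n)

lemma sqE_lt {k n i x y : ℕ} (hn : 0 < n) (hi : i < n) (h : sqE k n i x y) : x < n ∧ y < n := by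
  rcases h with ⟨rfl, s, _, _, rfl⟩ | ⟨j, _, e, _, rfl, rfl⟩
  · exact ⟨hi, Nat.mod_lt _ hn⟩
  · exact ⟨Nat.mod_lt _ hn, Nat.mod_lt _ hn⟩

lemma sqE_cp {k n i i' : ℕ} (hk : 1 ≤ k) (hn : 4*k ≤ n) (hi : i < n)
    {s j e : ℕ} (hs1 : 1 ≤ s) (hs2 : s ≤ 2*k) (hj : j < k) (he : e = 1 ∨ e = 2)
    (hx : i = (i' + (n - (4*(k-1-j)+2))) % n)
    (hxy : (i + s) % n = (i' + 2*j + e) % n) : False := by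
  have h1 : i ≡ i' + (n - (4*(k-1-j)+2)) [MOD n] := by rw [hx]; exact Nat.mod_modEq _ _
  have h2 : i + (4*(k-1-j)+2) ≡ i' [MOD n] := by
    have h1b := h1.add_right (4*(k-1-j)+2)
    have e1 : i' + (n - (4*(k-1-j)+2)) + (4*(k-1-j)+2) = i' + n := by omega
    rw [e1] at h1b
    exact h1b.trans (by unfold Nat.ModEq; rw [Nat.add_mod_right])
  have h3 : i + s ≡ i' + 2*j + e [MOD n] := hxy
  have h4 := h2.add h3.symm
  have e1 : i + (4*(k-1-j)+2) + (i' + 2*j + e) = (i' + i) + ((4*(k-1-j)+2) + 2*j + e) := by ring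
  have e2 : i' + (i + s) = (i' + i) + s := by ring
  rw [e1, e2] at h4
  have h5 := Nat.ModEq.add_left_cancel' _ h4
  exact modeq_false h5.symm (by omega) (by omega)

lemma sqE_eq {k n i i' x y : ℕ} (hk : 1 ≤ k) (hn : 4*k ≤ n) (hi : i < n) (hi' : i' < n)
    (h : sqE k n i x y) (h' : sqE k n i' x y) : i = i' := by
  rcases h with ⟨hx, s, hs1, hs2, hy⟩ | ⟨j, hj, e, he, hx, hy⟩
  · rcases h' with ⟨hx', s', hs1', hs2', hy'⟩ | ⟨j', hj', e', he', hx', hy'⟩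
    · omega
    · exact absurd (sqE_cp hk hn hi hs1 hs2 hj' he' (hx.symm.trans hx') (hy.symm.trans hy'))
        (by simp)
  · rcases h' with ⟨hx', s', hs1', hs2', hy'⟩ | ⟨j', hj', e', he', hx', hy'⟩
    · exact absurd (sqE_cp hk hn hi' hs1' hs2' hj he (hx'.symm.trans hx) (hy'.symm.trans hy))
        (by simp)
    · -- partner-partner
      have h1 : i + (n - (4*(k-1-j)+2)) ≡ i' + (n - (4*(k-1-j')+2)) [MOD n] :=
        hx.symm.trans hx'
      have h1b := h1.add_right ((4*(k-1-j)+2) + (4*(k-1-j')+2))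
      have e1 : i + (n - (4*(k-1-j)+2)) + ((4*(k-1-j)+2) + (4*(k-1-j')+2))
          = (i + (4*(k-1-j')+2)) + n := by omega
      have e2 : i' + (n - (4*(k-1-j')+2)) + ((4*(k-1-j)+2) + (4*(k-1-j')+2))
          = (i' + (4*(k-1-j)+2)) + n := by omega
      rw [e1, e2] at h1b
      have h2 : i + (4*(k-1-j')+2) ≡ i' + (4*(k-1-j)+2) [MOD n] :=
        Nat.ModEq.add_right_cancel' _ h1b
      have h3 : i + 2*j + e ≡ i' + 2*j' + e' [MOD n] := hy.symm.trans hy'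
      have h4 := h2.add h3.symm
      have e3 : i + (4*(k-1-j')+2) + (i' + 2*j' + e')
          = (i' + i) + ((4*(k-1-j')+2) + 2*j' + e') := by ring
      have e4 : i' + (4*(k-1-j)+2) + (i + 2*j + e)
          = (i' + i) + ((4*(k-1-j)+2) + 2*j + e) := by ring
      rw [e3, e4] at h4
      have h5 := Nat.ModEq.add_left_cancel' _ h4
      have h6 : (4*(k-1-j')+2) + 2*j' + e' = (4*(k-1-j)+2) + 2*j + e := by
        rcases le_total ((4*(k-1-j')+2) + 2*j' + e') ((4*(k-1-j)+2) + 2*j + e) with hle | hle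
        · exact modeq_eq h5 hle (by omega)
        · exact (modeq_eq h5.symm hle (by omega)).symm
      have hjj : j = j' ∧ e = e' := by omega
      obtain ⟨rfl, rfl⟩ := hjj
      have h7 : i ≡ i' [MOD n] := Nat.ModEq.add_right_cancel' _ h2
      exact modeq_eq' h7 hi hi'

/-- rectangle scheme edge predicate -/
def rectE (k m y' a b : ℕ) : Prop :=
  (∃ s, s < 2*k ∧ a = 2*k*(y' % 2) + s ∧ b = y') ∨
  (∃ j, j < k ∧ ∃ e, (e = 0 ∨ e = 1) ∧ a = 2*k*(y' % 2) + 2*j + e ∧ b = (y' + 2*j + 1) % m)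

lemma rectE_lt {k m y' a b : ℕ} (hm : 0 < m) (hy : y' < m) (h : rectE k m y' a b) :
    a < 4*k ∧ b < m := by
  have h2 : y' % 2 = 0 ∨ y' % 2 = 1 := by omega
  rcases h with ⟨s, hs, rfl, rfl⟩ | ⟨j, hj, e, he, rfl, rfl⟩ <;>
    rcases h2 with h2 | h2 <;> rw [h2] <;>
    exact ⟨by omega, by first | exact hy | exact Nat.mod_lt _ hm⟩

lemma rectE_eq {k m y' y'' a b : ℕ} (hk : 1 ≤ k) (hm2 : 2 ∣ m) (hm4 : 2*k < m)
    (hy : y' < m) (hy' : y'' < m) (h : rectE k m y' a b) (h' : rectE k m y'' a b) :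
    y' = y'' := by
  have par : ∀ x : ℕ, (x % m) % 2 = x % 2 := fun x => Nat.mod_mod_of_dvd x hm2
  have p1 : y' % 2 = 0 ∨ y' % 2 = 1 := by omega
  have p2 : y'' % 2 = 0 ∨ y'' % 2 = 1 := by omega
  rcases h with ⟨s, hs, ha, hb⟩ | ⟨j, hj, e, he, ha, hb⟩
  · rcases h' with ⟨s', hs', ha', hb'⟩ | ⟨j', hj', e', he', ha', hb'⟩
    · omega
    · exfalso
      have hp : y' % 2 ≠ y'' % 2 := by
        have := par (y'' + 2*j' + 1); omega
      rcases p1 with e1 | e1 <;> rcases p2 with e2 | e2 <;>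
        rw [e1] at ha <;> rw [e2] at ha' <;> omega
  · rcases h' with ⟨s', hs', ha', hb'⟩ | ⟨j', hj', e', he', ha', hb'⟩
    · exfalso
      have hp : y' % 2 ≠ y'' % 2 := by
        have := par (y' + 2*j + 1); omega
      rcases p1 with e1 | e1 <;> rcases p2 with e2 | e2 <;>
        rw [e1] at ha <;> rw [e2] at ha' <;> omega
    · have hp : y' % 2 = y'' % 2 := by
        have q1 := par (y' + 2*j + 1)
        have q2 := par (y'' + 2*j' + 1)
        omega
      have hje : j = j' ∧ e = e' := by
        rcases p1 with e1 | e1 <;> have e2 : y'' % 2 = y' % 2 := hp.symm <;>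
          rw [e1] at ha e2 <;> rw [e2] at ha' <;> omega
      obtain ⟨rfl, rfl⟩ := hje
      have h1 : (y' + 2*j) + 1 ≡ (y'' + 2*j) + 1 [MOD m] := hb.symm.trans hb'
      have h2 : y' ≡ y'' [MOD m] :=
        Nat.ModEq.add_right_cancel' _ (Nat.ModEq.add_right_cancel' 1 h1)
      exact modeq_eq' h2 hy hy'


section Flower
variable {V : Type*} (G : SimpleGraph V) {k : ℕ} (v : V) (A B W : Fin k → V)

variable (hA : ∀ j, G.Adj v (A j)) (hB : ∀ j, G.Adj v (B j))
  (hWA : ∀ j, G.Adj (W j) (A j)) (hWB : ∀ j, G.Adj (W j) (B j))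

/-- the flower subgraph: a union of `k` four-cycles `v - A j - W j - B j - v`. -/
def flowerSub : G.Subgraph where
  verts := {v} ∪ Set.range A ∪ Set.range B ∪ Set.range W
  Adj x y := ∃ j : Fin k,
    (x = v ∧ (y = A j ∨ y = B j)) ∨ (y = v ∧ (x = A j ∨ x = B j)) ∨
    (x = W j ∧ (y = A j ∨ y = B j)) ∨ (y = W j ∧ (x = A j ∨ x = B j))
  adj_sub := by
    rintro x y ⟨j, h⟩
    rcases h with ⟨rfl, rfl | rfl⟩ | ⟨rfl, rfl | rfl⟩ | ⟨rfl, rfl | rfl⟩ | ⟨rfl, rfl | rfl⟩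
    · exact hA j
    · exact hB j
    · exact (hA j).symm
    · exact (hB j).symm
    · exact hWA j
    · exact hWB j
    · exact (hWA j).symm
    · exact (hWB j).symm
  edge_vert := by
    rintro x y ⟨j, h⟩
    rcases h with ⟨rfl, _⟩ | ⟨_, rfl | rfl⟩ | ⟨rfl, _⟩ | ⟨_, rfl | rfl⟩ <;>
      simp [Set.mem_union, Set.mem_range] <;> tauto
  symm := by
    constructor
    rintro x y ⟨j, h⟩
    exact ⟨j, by tauto⟩

lemma flowerSub_adj {x y : V} :
    (flowerSub G v A B W hA hB hWA hWB).Adj x y ↔ ∃ j : Fin k,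
    (x = v ∧ (y = A j ∨ y = B j)) ∨ (y = v ∧ (x = A j ∨ x = B j)) ∨
    (x = W j ∧ (y = A j ∨ y = B j)) ∨ (y = W j ∧ (x = A j ∨ x = B j)) := Iff.rfl

lemma flowerSub_verts :
    (flowerSub G v A B W hA hB hWA hWB).verts = {v} ∪ Set.range A ∪ Set.range B ∪ Set.range W :=
  rfl

variable (hABi : ∀ j j' : Fin k, (A j = A j' → j = j') ∧ (B j = B j' → j = j') ∧ A j ≠ B j')
  (hWi : ∀ j j' : Fin k, W j = W j' → j = j') (hWv : ∀ j, W j ≠ v)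
  (hAW : ∀ j j' : Fin k, A j ≠ W j') (hBW : ∀ j j' : Fin k, B j ≠ W j')

include hA hB hWA hWB hABi hWi hWv hAW hBW

lemma flowerSub_nbr_v :
    (flowerSub G v A B W hA hB hWA hWB).neighborSet v = Set.range A ∪ Set.range B := by
  ext u
  simp only [Subgraph.mem_neighborSet, flowerSub_adj, Set.mem_union, Set.mem_range]
  constructor
  · rintro ⟨j, h⟩
    rcases h with ⟨-, rfl | rfl⟩ | ⟨rfl, rfl | rfl⟩ | ⟨hv, -⟩ | ⟨rfl, rfl | rfl⟩
    · exact Or.inl ⟨j, rfl⟩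
    · exact Or.inr ⟨j, rfl⟩
    · exact absurd rfl (hA j).ne'.symm
    · exact absurd rfl (hB j).ne'.symm
    · exact absurd hv (hWv j).symm
    · exact absurd rfl (hA j).ne'.symm
    · exact absurd rfl (hB j).ne'.symm
  · rintro (⟨j, rfl⟩ | ⟨j, rfl⟩) <;> exact ⟨j, by tauto⟩

lemma flowerSub_nbr_A (j0 : Fin k) :
    (flowerSub G v A B W hA hB hWA hWB).neighborSet (A j0) = {v, W j0} := by
  ext u
  simp only [Subgraph.mem_neighborSet, flowerSub_adj, Set.mem_insert_iff, Set.mem_singleton_iff]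
  constructor
  · rintro ⟨j, h⟩
    rcases h with ⟨hav, -⟩ | ⟨rfl, -⟩ | ⟨haw, -⟩ | ⟨rfl, ha | ha⟩
    · exact absurd hav (hA j0).ne'
    · exact Or.inl rfl
    · exact absurd haw (hAW j0 j)
    · exact Or.inr (by rw [(hABi j0 j).1 ha])
    · exact absurd ha ((hABi j0 j).2.2)
  · rintro (rfl | rfl)
    · exact ⟨j0, Or.inr (Or.inl ⟨rfl, Or.inl rfl⟩)⟩
    · exact ⟨j0, Or.inr (Or.inr (Or.inr ⟨rfl, Or.inl rfl⟩))⟩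

lemma flowerSub_nbr_B (j0 : Fin k) :
    (flowerSub G v A B W hA hB hWA hWB).neighborSet (B j0) = {v, W j0} := by
  ext u
  simp only [Subgraph.mem_neighborSet, flowerSub_adj, Set.mem_insert_iff, Set.mem_singleton_iff]
  constructor
  · rintro ⟨j, h⟩
    rcases h with ⟨hav, -⟩ | ⟨rfl, -⟩ | ⟨haw, -⟩ | ⟨rfl, ha | ha⟩
    · exact absurd hav (hB j0).ne'
    · exact Or.inl rfl
    · exact absurd haw (hBW j0 j)
    · exact absurd ha.symm ((hABi j j0).2.2)
    · exact Or.inr (by rw [(hABi j0 j).2.1 ha])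
  · rintro (rfl | rfl)
    · exact ⟨j0, Or.inr (Or.inl ⟨rfl, Or.inr rfl⟩)⟩
    · exact ⟨j0, Or.inr (Or.inr (Or.inr ⟨rfl, Or.inr rfl⟩))⟩

lemma flowerSub_nbr_W (j0 : Fin k) :
    (flowerSub G v A B W hA hB hWA hWB).neighborSet (W j0) = {A j0, B j0} := by
  ext u
  simp only [Subgraph.mem_neighborSet, flowerSub_adj, Set.mem_insert_iff, Set.mem_singleton_iff]
  constructor
  · rintro ⟨j, h⟩
    rcases h with ⟨hav, -⟩ | ⟨rfl, ha | ha⟩ | ⟨hw, hu | hu⟩ | ⟨rfl, ha | ha⟩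
    · exact absurd hav (hWv j0)
    · exact absurd ha.symm (hAW j j0)
    · exact absurd ha.symm (hBW j j0)
    · rw [hWi j0 j hw] at *; exact Or.inl hu
    · rw [hWi j0 j hw] at *; exact Or.inr hu
    · exact absurd ha.symm (hAW j j0)
    · exact absurd ha.symm (hBW j j0)
  · rintro (rfl | rfl)
    · exact ⟨j0, Or.inr (Or.inr (Or.inl ⟨rfl, Or.inl rfl⟩))⟩
    · exact ⟨j0, Or.inr (Or.inr (Or.inl ⟨rfl, Or.inr rfl⟩))⟩

lemma flowerSub_props (hk : 1 ≤ k) (r c : ℕ) (hrc : (r - 1) * 2 + c ≤ 2 * k) :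
    (flowerSub G v A B W hA hB hWA hWB).coe.Connected ∧
    (flowerSub G v A B W hA hB hWA hWB).edgeSet.Nonempty ∧
    (∀ u ∈ (flowerSub G v A B W hA hB hWA hWB).verts,
      Even (((flowerSub G v A B W hA hB hWA hWB).neighborSet u).ncard)) ∧
    v ∈ (flowerSub G v A B W hA hB hWA hWB).verts ∧
    (∀ u ∈ (flowerSub G v A B W hA hB hWA hWB).verts, u ≠ v →
      (r - 1) * ((flowerSub G v A B W hA hB hWA hWB).neighborSet u).ncard + c ≤
        ((flowerSub G v A B W hA hB hWA hWB).neighborSet v).ncard) := by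
  set H := flowerSub G v A B W hA hB hWA hWB with hH
  have hvmem : v ∈ H.verts := by
    rw [hH, flowerSub_verts]; simp
  have hAinj : Function.Injective A := fun j j' h => (hABi j j').1 h
  have hBinj : Function.Injective B := fun j j' h => (hABi j j').2.1 h
  have hcardA : (Set.range A).ncard = k := by
    rw [← Nat.card_coe_set_eq, Nat.card_range_of_injective hAinj, Nat.card_eq_fintype_card,
      Fintype.card_fin]
  have hcardB : (Set.range B).ncard = k := by
    rw [← Nat.card_coe_set_eq, Nat.card_range_of_injective hBinj, Nat.card_eq_fintype_card,
      Fintype.card_fin]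
  have hdisj : Disjoint (Set.range A) (Set.range B) := by
    rw [Set.disjoint_left]
    rintro x ⟨j, rfl⟩ ⟨j', h⟩
    exact (hABi j j').2.2 h.symm
  have hnbrv : (H.neighborSet v).ncard = 2 * k := by
    rw [hH, flowerSub_nbr_v G v A B W hA hB hWA hWB hABi hWi hWv hAW hBW,
      Set.ncard_union_eq hdisj (Set.finite_range A) (Set.finite_range B), hcardA, hcardB]
    ring
  -- neighbor card of any non-center vertex is 2
  have hnbr2 : ∀ u ∈ H.verts, u ≠ v → (H.neighborSet u).ncard = 2 := by
    intro u hu hne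
    rw [hH, flowerSub_verts] at hu
    rcases hu with ((rfl | ⟨j, rfl⟩) | ⟨j, rfl⟩) | ⟨j, rfl⟩
    · exact absurd rfl hne
    · rw [hH, flowerSub_nbr_A G v A B W hA hB hWA hWB hABi hWi hWv hAW hBW j]
      exact Set.ncard_pair (fun h => hWv j h.symm)
    · rw [hH, flowerSub_nbr_B G v A B W hA hB hWA hWB hABi hWi hWv hAW hBW j]
      exact Set.ncard_pair (fun h => hWv j h.symm)
    · rw [hH, flowerSub_nbr_W G v A B W hA hB hWA hWB hABi hWi hWv hAW hBW j]
      exact Set.ncard_pair ((hABi j j).2.2)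
  refine ⟨?_, ?_, ?_, hvmem, ?_⟩
  · -- connectivity
    rw [connected_iff]
    constructor
    · have key : ∀ u : H.verts, H.coe.Reachable u ⟨v, hvmem⟩ := by
        rintro ⟨u, hu⟩
        have hu' := hu
        rw [hH, flowerSub_verts] at hu'
        have hadjcoe : ∀ (a b : V) (ha : a ∈ H.verts) (hb : b ∈ H.verts),
            H.Adj a b → H.coe.Adj ⟨a, ha⟩ ⟨b, hb⟩ := by
          intro a b ha hb hab
          rw [Subgraph.coe_adj]
          exact hab
        rcases hu' with ((rfl | ⟨j, rfl⟩) | ⟨j, rfl⟩) | ⟨j, rfl⟩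
        · rfl
        · exact (hadjcoe _ _ hu hvmem ⟨j, Or.inr (Or.inl ⟨rfl, Or.inl rfl⟩)⟩).reachable
        · exact (hadjcoe _ _ hu hvmem ⟨j, Or.inr (Or.inl ⟨rfl, Or.inr rfl⟩)⟩).reachable
        · have hAmem : A j ∈ H.verts := by
            rw [hH, flowerSub_verts]; exact Or.inl (Or.inl (Or.inr ⟨j, rfl⟩))
          exact ((hadjcoe _ _ hu hAmem
            ⟨j, Or.inr (Or.inr (Or.inl ⟨rfl, Or.inl rfl⟩))⟩).reachable).trans
            ((hadjcoe _ _ hAmem hvmem ⟨j, Or.inr (Or.inl ⟨rfl, Or.inl rfl⟩)⟩).reachable)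
      intro a b
      exact (key a).trans (key b).symm
    · exact ⟨⟨v, hvmem⟩⟩
  · -- nonempty edge set
    refine ⟨s(v, A ⟨0, hk⟩), ?_⟩
    rw [Subgraph.mem_edgeSet]
    exact ⟨⟨0, hk⟩, Or.inl ⟨rfl, Or.inl rfl⟩⟩
  · -- even degrees
    intro u hu
    by_cases hne : u = v
    · subst hne; rw [hnbrv]; exact even_two_mul k
    · rw [hnbr2 u hu hne]; exact even_two
  · -- degree condition
    intro u hu hne
    rw [hnbr2 u hu hne, hnbrv]
    omega

omit hABi hWi hWv hAW hBW in
lemma flowerSub_edge_mem {e : Sym2 V}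
    (h : e ∈ (flowerSub G v A B W hA hB hWA hWB).edgeSet) :
    ∃ j : Fin k, e = s(v, A j) ∨ e = s(v, B j) ∨ e = s(W j, A j) ∨ e = s(W j, B j) := by
  induction e with
  | _ x y =>
    rw [Subgraph.mem_edgeSet] at h
    obtain ⟨j, hj⟩ := h
    refine ⟨j, ?_⟩
    rcases hj with ⟨rfl, rfl | rfl⟩ | ⟨rfl, rfl | rfl⟩ | ⟨rfl, rfl | rfl⟩ | ⟨rfl, rfl | rfl⟩
    · exact Or.inl rfl
    · exact Or.inr (Or.inl rfl)
    · exact Or.inl (Sym2.eq_swap)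
    · exact Or.inr (Or.inl (Sym2.eq_swap))
    · exact Or.inr (Or.inr (Or.inl rfl))
    · exact Or.inr (Or.inr (Or.inr rfl))
    · exact Or.inr (Or.inr (Or.inl Sym2.eq_swap))
    · exact Or.inr (Or.inr (Or.inr Sym2.eq_swap))

end Flower

section Inst
variable (k t t' p h m : ℕ)

def Good : Prop :=
  1 ≤ k ∧ p = 4*k + t' % 2 ∧ h = t - p ∧ m = t' - p ∧ 8*k + 2 ≤ t ∧ t ≤ t'

variable {k t t' p h m}

lemma Good.facts (H : Good k t t' p h m) :
    1 ≤ k ∧ 4*k ≤ p ∧ 0 < p ∧ p + h = t ∧ p ≤ h ∧ p + m = t' ∧ h ≤ m ∧ 2 ∣ m ∧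
    4*k ≤ h ∧ 2*k < m ∧ 0 < h ∧ 0 < m ∧ 2*p ≤ t ∧ p ≤ t' ∧ t ≤ t' := by
  obtain ⟨h1, h2, h3, h4, h5, h6⟩ := H
  omega

/-- petal spoke A -/
def AA (H : Good k t t' p h m) (v : Fin t ⊕ Fin t') (j : Fin k) : Fin t ⊕ Fin t' :=
  match v with
  | .inl i =>
    if _hc : (i : ℕ) < p then
      .inr ⟨((i : ℕ) + (2*(j:ℕ)+1)) % p, by
        have h1 := H.facts; have h2 := Nat.mod_lt ((i : ℕ) + (2*(j:ℕ)+1)) (y := p) (by omega)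
        omega⟩
    else
      .inr ⟨p + (((i:ℕ) - p) + (2*(j:ℕ)+1)) % h, by
        have h1 := H.facts; have h2 := Nat.mod_lt (((i:ℕ) - p) + (2*(j:ℕ)+1)) (y := h) (by omega)
        omega⟩
  | .inr b =>
    if _hc : (b : ℕ) < p then
      .inl ⟨p + ((b:ℕ) + (2*(j:ℕ)+1)) % p, by
        have h1 := H.facts; have h2 := Nat.mod_lt ((b:ℕ) + (2*(j:ℕ)+1)) (y := p) (by omega)
        omega⟩
    else
      .inl ⟨2*k*(((b:ℕ) - p) % 2) + 2*(j:ℕ), by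
        have h1 := H.facts
        have h2 : ((b:ℕ) - p) % 2 = 0 ∨ ((b:ℕ) - p) % 2 = 1 := by omega
        have h3 : 2*k*(((b:ℕ) - p) % 2) ≤ 2*k := by
          rcases h2 with h2 | h2 <;> simp [h2]
        have h4 := j.isLt
        omega⟩

/-- petal spoke B -/
def BB (H : Good k t t' p h m) (v : Fin t ⊕ Fin t') (j : Fin k) : Fin t ⊕ Fin t' :=
  match v with
  | .inl i =>
    if _hc : (i : ℕ) < p then
      .inr ⟨((i : ℕ) + (2*(j:ℕ)+2)) % p, by
        have h1 := H.facts; have h2 := Nat.mod_lt ((i : ℕ) + (2*(j:ℕ)+2)) (y := p) (by omega)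
        omega⟩
    else
      .inr ⟨p + (((i:ℕ) - p) + (2*(j:ℕ)+2)) % h, by
        have h1 := H.facts; have h2 := Nat.mod_lt (((i:ℕ) - p) + (2*(j:ℕ)+2)) (y := h) (by omega)
        omega⟩
  | .inr b =>
    if _hc : (b : ℕ) < p then
      .inl ⟨p + ((b:ℕ) + (2*(j:ℕ)+2)) % p, by
        have h1 := H.facts; have h2 := Nat.mod_lt ((b:ℕ) + (2*(j:ℕ)+2)) (y := p) (by omega)
        omega⟩
    else
      .inl ⟨2*k*(((b:ℕ) - p) % 2) + (2*(j:ℕ)+1), by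
        have h1 := H.facts
        have h2 : ((b:ℕ) - p) % 2 = 0 ∨ ((b:ℕ) - p) % 2 = 1 := by omega
        have h3 : 2*k*(((b:ℕ) - p) % 2) ≤ 2*k := by
          rcases h2 with h2 | h2 <;> simp [h2]
        have h4 := j.isLt
        omega⟩

/-- petal partner W -/
def WW (H : Good k t t' p h m) (v : Fin t ⊕ Fin t') (j : Fin k) : Fin t ⊕ Fin t' :=
  match v with
  | .inl i =>
    if _hc : (i : ℕ) < p then
      .inl ⟨((i : ℕ) + (p - (4*(k-1-(j:ℕ))+2))) % p, by
        have h1 := H.facts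
        have h2 := Nat.mod_lt ((i : ℕ) + (p - (4*(k-1-(j:ℕ))+2))) (y := p) (by omega)
        omega⟩
    else
      .inl ⟨p + (((i:ℕ) - p) + (h - (4*(k-1-(j:ℕ))+2))) % h, by
        have h1 := H.facts
        have h2 := Nat.mod_lt (((i:ℕ) - p) + (h - (4*(k-1-(j:ℕ))+2))) (y := h) (by omega)
        omega⟩
  | .inr b =>
    if _hc : (b : ℕ) < p then
      .inr ⟨((b:ℕ) + (p - (4*(k-1-(j:ℕ))+2))) % p, by
        have h1 := H.facts
        have h2 := Nat.mod_lt ((b:ℕ) + (p - (4*(k-1-(j:ℕ))+2))) (y := p) (by omega)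
        omega⟩
    else
      .inr ⟨p + (((b:ℕ) - p) + (2*(j:ℕ)+1)) % m, by
        have h1 := H.facts
        have h2 := Nat.mod_lt (((b:ℕ) - p) + (2*(j:ℕ)+1)) (y := m) (by omega)
        omega⟩

lemma adj_AA (H : Good k t t' p h m) (v : Fin t ⊕ Fin t') (j : Fin k) :
    (completeBipartiteGraph (Fin t) (Fin t')).Adj v (AA H v j) := by
  rcases v with i | b <;> simp only [AA] <;> split <;> simp

lemma adj_BB (H : Good k t t' p h m) (v : Fin t ⊕ Fin t') (j : Fin k) :
    (completeBipartiteGraph (Fin t) (Fin t')).Adj v (BB H v j) := by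
  rcases v with i | b <;> simp only [BB] <;> split <;> simp

lemma adj_WA (H : Good k t t' p h m) (v : Fin t ⊕ Fin t') (j : Fin k) :
    (completeBipartiteGraph (Fin t) (Fin t')).Adj (WW H v j) (AA H v j) := by
  rcases v with i | b <;> simp only [AA, WW] <;> split <;> simp

lemma adj_WB (H : Good k t t' p h m) (v : Fin t ⊕ Fin t') (j : Fin k) :
    (completeBipartiteGraph (Fin t) (Fin t')).Adj (WW H v j) (BB H v j) := by
  rcases v with i | b <;> simp only [BB, WW] <;> split <;> simp

end Inst

section Bundle
variable {k t t' p h m : ℕ} (H : Good k t t' p h m)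

lemma add_mod_inj' {n a b c : ℕ} (h : (a + b) % n = (a + c) % n) (hb : b < n) (hc : c < n) :
    b = c := by
  have h2 : b ≡ c [MOD n] := Nat.ModEq.add_left_cancel' a h
  have := Nat.mod_eq_of_lt hb
  have := Nat.mod_eq_of_lt hc
  unfold Nat.ModEq at h2
  omega

lemma mod_shift_ne {n a s : ℕ} (ha : a < n) (hs1 : 0 < s) (hs2 : s < n) : (a + s) % n ≠ a := by
  intro hq
  have hq' : (a + s) % n = (a + 0) % n := by rw [Nat.add_zero, Nat.mod_eq_of_lt ha, hq]
  have := add_mod_inj' hq' hs2 (by omega)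
  omega

lemma bundle_AB (v : Fin t ⊕ Fin t') (j j' : Fin k) :
    (AA H v j = AA H v j' → j = j') ∧ (BB H v j = BB H v j' → j = j') ∧ AA H v j ≠ BB H v j' := by
  have F := H.facts
  have hj := j.isLt
  have hj' := j'.isLt
  rcases v with i | b
  · by_cases hc : (i : ℕ) < p
    · refine ⟨fun hq => ?_, fun hq => ?_, fun hq => ?_⟩ <;>
        simp only [AA, BB, dif_pos hc, Sum.inr.injEq, Fin.mk.injEq] at hq <;>
        have := add_mod_inj' (n := p) hq (by omega) (by omega)
      · exact Fin.val_injective (by omega)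
      · exact Fin.val_injective (by omega)
      · omega
    · refine ⟨fun hq => ?_, fun hq => ?_, fun hq => ?_⟩ <;>
        simp only [AA, BB, dif_neg hc, Sum.inr.injEq, Fin.mk.injEq,
          Nat.add_right_cancel_iff, Nat.add_left_cancel_iff] at hq <;>
        have := add_mod_inj' (n := h) hq (by omega) (by omega)
      · exact Fin.val_injective (by omega)
      · exact Fin.val_injective (by omega)
      · omega
  · by_cases hc : (b : ℕ) < p
    · refine ⟨fun hq => ?_, fun hq => ?_, fun hq => ?_⟩ <;>
        simp only [AA, BB, dif_pos hc, Sum.inl.injEq, Fin.mk.injEq,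
          Nat.add_right_cancel_iff, Nat.add_left_cancel_iff] at hq <;>
        have := add_mod_inj' (n := p) hq (by omega) (by omega)
      · exact Fin.val_injective (by omega)
      · exact Fin.val_injective (by omega)
      · omega
    · refine ⟨fun hq => ?_, fun hq => ?_, fun hq => ?_⟩ <;>
        simp only [AA, BB, dif_neg hc, Sum.inl.injEq, Fin.mk.injEq] at hq
      · exact Fin.val_injective (by omega)
      · exact Fin.val_injective (by omega)
      · omega

lemma bundle_Wi (v : Fin t ⊕ Fin t') (j j' : Fin k) (hq : WW H v j = WW H v j') : j = j' := by
  have F := H.facts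
  have hj := j.isLt
  have hj' := j'.isLt
  rcases v with i | b
  · by_cases hc : (i : ℕ) < p
    · simp only [WW, dif_pos hc, Sum.inl.injEq, Fin.mk.injEq] at hq
      have := add_mod_inj' (n := p) hq (by omega) (by omega)
      exact Fin.val_injective (by omega)
    · simp only [WW, dif_neg hc, Sum.inl.injEq, Fin.mk.injEq, Nat.add_left_cancel_iff] at hq
      have := add_mod_inj' (n := h) hq (by omega) (by omega)
      exact Fin.val_injective (by omega)
  · by_cases hc : (b : ℕ) < p
    · simp only [WW, dif_pos hc, Sum.inr.injEq, Fin.mk.injEq] at hq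
      have := add_mod_inj' (n := p) hq (by omega) (by omega)
      exact Fin.val_injective (by omega)
    · simp only [WW, dif_neg hc, Sum.inr.injEq, Fin.mk.injEq, Nat.add_left_cancel_iff] at hq
      have := add_mod_inj' (n := m) hq (by omega) (by omega)
      exact Fin.val_injective (by omega)

lemma bundle_Wv (v : Fin t ⊕ Fin t') (j : Fin k) : WW H v j ≠ v := by
  have F := H.facts
  have hj := j.isLt
  rcases v with i | b
  · by_cases hc : (i : ℕ) < p
    · intro hq
      simp only [WW, dif_pos hc, Sum.inl.injEq, Fin.ext_iff] at hq
      exact mod_shift_ne (n := p) (by omega) (by omega) (by omega) hq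
    · intro hq
      simp only [WW, dif_neg hc, Sum.inl.injEq, Fin.ext_iff] at hq
      exact mod_shift_ne (n := h) (a := (i:ℕ) - p) (s := h - (4*(k-1-(j:ℕ))+2))
        (by omega) (by omega) (by omega) (by omega)
  · by_cases hc : (b : ℕ) < p
    · intro hq
      simp only [WW, dif_pos hc, Sum.inr.injEq, Fin.ext_iff] at hq
      exact mod_shift_ne (n := p) (by omega) (by omega) (by omega) hq
    · intro hq
      simp only [WW, dif_neg hc, Sum.inr.injEq, Fin.ext_iff] at hq
      exact mod_shift_ne (n := m) (a := (b:ℕ) - p) (s := 2*(j:ℕ)+1)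
        (by omega) (by omega) (by omega) (by omega)

lemma bundle_AW (v : Fin t ⊕ Fin t') (j j' : Fin k) : AA H v j ≠ WW H v j' := by
  rcases v with i | b <;> simp only [AA, WW] <;> split <;> simp

lemma bundle_BW (v : Fin t ⊕ Fin t') (j j' : Fin k) : BB H v j ≠ WW H v j' := by
  rcases v with i | b <;> simp only [BB, WW] <;> split <;> simp

end Bundle

section EPPsec
variable {k t t' p h m : ℕ}

def EPP (k p h m : ℕ) {t t' : ℕ} (v : Fin t ⊕ Fin t') (x y : ℕ) : Prop :=
  match v with
  | .inl i => if (i : ℕ) < p then sqE k p (i:ℕ) x y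
      else ∃ x0 y0, sqE k h ((i:ℕ) - p) x0 y0 ∧ x = p + x0 ∧ y = p + y0
  | .inr b => if (b : ℕ) < p then ∃ x0 y0, sqE k p (b:ℕ) x0 y0 ∧ x = p + y0 ∧ y = x0
      else ∃ a0 b0, rectE k m ((b:ℕ) - p) a0 b0 ∧ x = a0 ∧ y = p + b0

lemma EPP_unique (H : Good k t t' p h m) {v v' : Fin t ⊕ Fin t'} {x y : ℕ}
    (hv : EPP k p h m v x y) (hv' : EPP k p h m v' x y) : v = v' := by
  obtain ⟨hk1, hk2, hk3, hk4, hk5, hk6, hk7, hk8, hk9, hk10, hk11, hk12, hk13, hk14, hk15⟩ :=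
    H.facts
  rcases v with i | b <;> rcases v' with i' | b' <;> simp only [EPP] at hv hv'
  · have hi := i.isLt; have hi' := i'.isLt
    by_cases h1 : (i:ℕ) < p <;> by_cases h2 : (i':ℕ) < p <;>
      [rw [if_pos h1] at hv; rw [if_pos h1] at hv; rw [if_neg h1] at hv; rw [if_neg h1] at hv] <;>
      [rw [if_pos h2] at hv'; rw [if_neg h2] at hv'; rw [if_pos h2] at hv'; rw [if_neg h2] at hv']
    · have := sqE_eq (by omega) (by omega) h1 h2 hv hv'
      exact congrArg Sum.inl (Fin.val_injective this)
    · obtain ⟨x0, y0, hs, hx, hy⟩ := hv'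
      have hbd := sqE_lt (by omega) h1 hv
      exfalso; omega
    · obtain ⟨x0, y0, hs, hx, hy⟩ := hv
      have hbd := sqE_lt (by omega) h2 hv'
      exfalso; omega
    · obtain ⟨x0, y0, hs, hx, hy⟩ := hv
      obtain ⟨x0', y0', hs', hx', hy'⟩ := hv'
      have e1 : x0 = x0' := by omega
      have e2 : y0 = y0' := by omega
      subst e1; subst e2
      have := sqE_eq (by omega) (by omega) (show (i:ℕ) - p < h by omega)
        (show (i':ℕ) - p < h by omega) hs hs'
      exact congrArg Sum.inl (Fin.val_injective (by omega))
  · have hi := i.isLt; have hb' := b'.isLt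
    exfalso
    by_cases h1 : (i:ℕ) < p <;> by_cases h2 : (b':ℕ) < p <;>
      [rw [if_pos h1] at hv; rw [if_pos h1] at hv; rw [if_neg h1] at hv; rw [if_neg h1] at hv] <;>
      [rw [if_pos h2] at hv'; rw [if_neg h2] at hv'; rw [if_pos h2] at hv'; rw [if_neg h2] at hv']
    · obtain ⟨x0, y0, hs, hx, hy⟩ := hv'
      have hbd := sqE_lt (by omega) h1 hv
      omega
    · obtain ⟨a0, b0, hs, hx, hy⟩ := hv'
      have hbd := sqE_lt (by omega) h1 hv
      omega
    · obtain ⟨x0, y0, hs, hx, hy⟩ := hv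
      obtain ⟨x0', y0', hs', hx', hy'⟩ := hv'
      have hbd := sqE_lt (by omega) h2 hs'
      omega
    · obtain ⟨x0, y0, hs, hx, hy⟩ := hv
      obtain ⟨a0, b0, hs', hx', hy'⟩ := hv'
      have hbd := rectE_lt (by omega) (show (b':ℕ) - p < m by omega) hs'
      omega
  · have hi' := i'.isLt; have hb := b.isLt
    exfalso
    by_cases h1 : (b:ℕ) < p <;> by_cases h2 : (i':ℕ) < p <;>
      [rw [if_pos h1] at hv; rw [if_pos h1] at hv; rw [if_neg h1] at hv; rw [if_neg h1] at hv] <;>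
      [rw [if_pos h2] at hv'; rw [if_neg h2] at hv'; rw [if_pos h2] at hv'; rw [if_neg h2] at hv']
    · obtain ⟨x0, y0, hs, hx, hy⟩ := hv
      have hbd := sqE_lt (by omega) h2 hv'
      omega
    · obtain ⟨x0, y0, hs, hx, hy⟩ := hv
      obtain ⟨x0', y0', hs', hx', hy'⟩ := hv'
      have hbd := sqE_lt (by omega) h1 hs
      omega
    · obtain ⟨a0, b0, hs, hx, hy⟩ := hv
      have hbd := sqE_lt (by omega) h2 hv'
      omega
    · obtain ⟨a0, b0, hs, hx, hy⟩ := hv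
      obtain ⟨x0', y0', hs', hx', hy'⟩ := hv'
      have hbd := rectE_lt (by omega) (show (b:ℕ) - p < m by omega) hs
      omega
  · have hb := b.isLt; have hb' := b'.isLt
    by_cases h1 : (b:ℕ) < p <;> by_cases h2 : (b':ℕ) < p <;>
      [rw [if_pos h1] at hv; rw [if_pos h1] at hv; rw [if_neg h1] at hv; rw [if_neg h1] at hv] <;>
      [rw [if_pos h2] at hv'; rw [if_neg h2] at hv'; rw [if_pos h2] at hv'; rw [if_neg h2] at hv']
    · obtain ⟨x0, y0, hs, hx, hy⟩ := hv
      obtain ⟨x0', y0', hs', hx', hy'⟩ := hv'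
      have e1 : x0 = x0' := by omega
      have e2 : y0 = y0' := by omega
      subst e1; subst e2
      have := sqE_eq (by omega) (by omega) h1 h2 hs hs'
      exact congrArg Sum.inr (Fin.val_injective this)
    · obtain ⟨x0, y0, hs, hx, hy⟩ := hv
      obtain ⟨a0, b0, hs', hx', hy'⟩ := hv'
      have hbd := rectE_lt (by omega) (show (b':ℕ) - p < m by omega) hs'
      exfalso; omega
    · obtain ⟨x0, y0, hs, hx, hy⟩ := hv'
      obtain ⟨a0, b0, hs', hx', hy'⟩ := hv
      have hbd := rectE_lt (by omega) (show (b:ℕ) - p < m by omega) hs'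
      exfalso; omega
    · obtain ⟨a0, b0, hs, hx, hy⟩ := hv
      obtain ⟨a0', b0', hs', hx', hy'⟩ := hv'
      have e1 : a0 = a0' := by omega
      have e2 : b0 = b0' := by omega
      subst e1; subst e2
      have := rectE_eq (by omega) (by omega) (by omega)
        (show (b:ℕ) - p < m by omega) (show (b':ℕ) - p < m by omega) hs hs'
      exact congrArg Sum.inr (Fin.val_injective (by omega))

lemma edge_EPP (H : Good k t t' p h m) (v : Fin t ⊕ Fin t') (j : Fin k)
    (e : Sym2 (Fin t ⊕ Fin t'))
    (he : e = s(v, AA H v j) ∨ e = s(v, BB H v j) ∨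
      e = s(WW H v j, AA H v j) ∨ e = s(WW H v j, BB H v j)) :
    ∃ (x : Fin t) (y : Fin t'), e = s(.inl x, .inr y) ∧ EPP k p h m v (x:ℕ) (y:ℕ) := by
  obtain ⟨hk1, hk2, hk3, hk4, hk5, hk6, hk7, hk8, hk9, hk10, hk11, hk12, hk13, hk14, hk15⟩ :=
    H.facts
  have hj := j.isLt
  rcases v with i | b
  · have hi := i.isLt
    by_cases hc : (i:ℕ) < p
    · rcases he with rfl | rfl | rfl | rfl <;>
        simp only [AA, BB, WW, dif_pos hc] <;> refine ⟨_, _, rfl, ?_⟩ <;>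
        simp only [EPP, if_pos hc]
      · exact Or.inl ⟨rfl, 2*(j:ℕ)+1, by omega, by omega, rfl⟩
      · exact Or.inl ⟨rfl, 2*(j:ℕ)+2, by omega, by omega, rfl⟩
      · exact Or.inr ⟨(j:ℕ), hj, 1, Or.inl rfl, rfl, by congr 1 <;> omega⟩
      · exact Or.inr ⟨(j:ℕ), hj, 2, Or.inr rfl, rfl, by congr 1 <;> omega⟩
    · rcases he with rfl | rfl | rfl | rfl <;>
        simp only [AA, BB, WW, dif_neg hc] <;> refine ⟨_, _, rfl, ?_⟩ <;>
        simp only [EPP, if_neg hc]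
      · exact ⟨(i:ℕ) - p, _, Or.inl ⟨rfl, 2*(j:ℕ)+1, by omega, by omega, rfl⟩, by omega, rfl⟩
      · exact ⟨(i:ℕ) - p, _, Or.inl ⟨rfl, 2*(j:ℕ)+2, by omega, by omega, rfl⟩, by omega, rfl⟩
      · exact ⟨_, _, Or.inr ⟨(j:ℕ), hj, 1, Or.inl rfl, rfl, by congr 1 <;> omega⟩, rfl, rfl⟩
      · exact ⟨_, _, Or.inr ⟨(j:ℕ), hj, 2, Or.inr rfl, rfl, by congr 1 <;> omega⟩, rfl, rfl⟩
  · have hb := b.isLt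
    by_cases hc : (b:ℕ) < p
    · rcases he with rfl | rfl | rfl | rfl <;>
        simp only [AA, BB, WW, dif_pos hc] <;> refine ⟨_, _, Sym2.eq_swap, ?_⟩ <;>
        simp only [EPP, if_pos hc]
      · exact ⟨(b:ℕ), _, Or.inl ⟨rfl, 2*(j:ℕ)+1, by omega, by omega, rfl⟩, rfl, rfl⟩
      · exact ⟨(b:ℕ), _, Or.inl ⟨rfl, 2*(j:ℕ)+2, by omega, by omega, rfl⟩, rfl, rfl⟩
      · exact ⟨_, _, Or.inr ⟨(j:ℕ), hj, 1, Or.inl rfl, rfl, by congr 1 <;> omega⟩, rfl, rfl⟩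
      · exact ⟨_, _, Or.inr ⟨(j:ℕ), hj, 2, Or.inr rfl, rfl, by congr 1 <;> omega⟩, rfl, rfl⟩
    · rcases he with rfl | rfl | rfl | rfl <;>
        simp only [AA, BB, WW, dif_neg hc] <;> refine ⟨_, _, Sym2.eq_swap, ?_⟩ <;>
        simp only [EPP, if_neg hc]
      · exact ⟨_, (b:ℕ) - p, Or.inl ⟨2*(j:ℕ), by omega, rfl, rfl⟩, rfl, by omega⟩
      · exact ⟨_, (b:ℕ) - p, Or.inl ⟨2*(j:ℕ)+1, by omega, rfl, rfl⟩, rfl, by omega⟩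
      · exact ⟨_, _, Or.inr ⟨(j:ℕ), hj, 0, Or.inl rfl, by ring, by congr 1 <;> omega⟩, rfl, rfl⟩
      · exact ⟨_, _, Or.inr ⟨(j:ℕ), hj, 1, Or.inr rfl, by ring, by congr 1 <;> omega⟩, rfl, rfl⟩

end EPPsec

end Aux

/-- For positive integers r, t, t' with 11 ≤ t ≤ t' ≤ 2t − 2 and a nonnegative integer c
with t ≥ 8r + 4c + 2, the complete bipartite graph K_{t,t'} is (r, c)-locally Eulerian. -/
theorem stmt_7 (r t t' c : ℕ) (hr : 1 ≤ r) (ht : 11 ≤ t) (htt' : t ≤ t')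
    (ht'' : t' ≤ 2 * t - 2) (htc : 8 * r + 4 * c + 2 ≤ t) :
    LocallyEulerian (completeBipartiteGraph (Fin t) (Fin t')) r c := by
  classical
  set k := max 1 (r - 1 + (c+1)/2) with hkdef
  have H : Good k t t' (4*k + t' % 2) (t - (4*k + t' % 2)) (t' - (4*k + t' % 2)) := by
    refine ⟨le_max_left _ _, rfl, rfl, rfl, ?_, htt'⟩
    omega
  have hk1 : 1 ≤ k := le_max_left _ _
  have hrc : (r - 1) * 2 + c ≤ 2 * k := by omega
  refine ⟨fun v => flowerSub _ v (AA H v) (BB H v) (WW H v)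
    (adj_AA H v) (adj_BB H v) (adj_WA H v) (adj_WB H v), ?_, ?_⟩
  · intro v w hne
    rw [Set.disjoint_left]
    intro e he he'
    obtain ⟨jv, hjv⟩ := flowerSub_edge_mem _ _ _ _ _ _ _ _ _ he
    obtain ⟨jw, hjw⟩ := flowerSub_edge_mem _ _ _ _ _ _ _ _ _ he'
    obtain ⟨x, y, hexy, hEP⟩ := edge_EPP H v jv e hjv
    obtain ⟨x', y', hexy', hEP'⟩ := edge_EPP H w jw e hjw
    rw [hexy] at hexy'
    rw [Sym2.eq_iff] at hexy'
    have hxy : x = x' ∧ y = y' := by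
      rcases hexy' with ⟨h1, h2⟩ | ⟨h1, h2⟩
      · exact ⟨Sum.inl_injective h1, Sum.inr_injective h2⟩
      · exact absurd h1 (by simp)
    obtain ⟨rfl, rfl⟩ := hxy
    exact hne (EPP_unique H hEP hEP')
  · intro v
    exact flowerSub_props _ v (AA H v) (BB H v) (WW H v)
      (adj_AA H v) (adj_BB H v) (adj_WA H v) (adj_WB H v)
      (bundle_AB H v) (bundle_Wi H v) (bundle_Wv H v) (bundle_AW H v) (bundle_BW H v)
      hk1 r c hrc
end

section
/- For all positive integers n and r with n ≥ r there exists a positive integer m0 such that for every integer m with m ≥ n and m ≥ m0, the chromatic number of the matching Kneser graph KG(K_{m,n}, rK_2) of the complete bipartite graph K_{m,n} equals m(n − r + 1). -/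
open SimpleGraph

namespace MKG

open Finset

attribute [local instance] Classical.propDecidable

variable {m n : ℕ}

/-- pair-world matching predicate -/
def IsPM {m n : ℕ} (P : Finset (Fin m × Fin n)) : Prop :=
  ∀ p ∈ P, ∀ q ∈ P, p ≠ q → p.1 ≠ q.1 ∧ p.2 ≠ q.2

noncomputable def rM {m n : ℕ} (E' : Finset (Fin m × Fin n)) (r : ℕ) :
    Finset (Finset (Fin m × Fin n)) :=
  E'.powerset.filter fun P => IsPM P ∧ P.card = r

lemma mem_rM {E' : Finset (Fin m × Fin n)} {r : ℕ} {P : Finset (Fin m × Fin n)} :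
    P ∈ rM E' r ↔ P ⊆ E' ∧ IsPM P ∧ P.card = r := by
  simp [rM, Finset.mem_filter, Finset.mem_powerset]

/-- Supersaturation: a large edge set contains many matchings of size r+1. -/
lemma supersat (hn : 0 < n) :
    ∀ (r c s : ℕ) (E' : Finset (Fin m × Fin n)),
      n * (c + (r + 1)) ≤ m → s + m * r ≤ E'.card →
      s * c ^ r ≤ (rM E' (r + 1)).card := by
  intro r
  induction r with
  | zero =>
    intro c s E' _ hcard
    have hinj : Set.InjOn (fun p => ({p} : Finset (Fin m × Fin n))) E' := by
      intro p _ q _ h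
      simpa using h
    have hsub : E'.image (fun p => ({p} : Finset (Fin m × Fin n))) ⊆ rM E' 1 := by
      intro P hP
      obtain ⟨p, hp, rfl⟩ := Finset.mem_image.mp hP
      refine mem_rM.mpr ⟨by simpa using hp, ?_, by simp⟩
      intro a ha b hb hab
      simp only [Finset.mem_singleton] at ha hb
      exact absurd (ha.trans hb.symm) hab
    calc s * c ^ 0 = s := by ring
      _ ≤ E'.card := by omega
      _ = (E'.image (fun p => ({p} : Finset (Fin m × Fin n)))).card :=
          (Finset.card_image_of_injOn hinj).symm
      _ ≤ (rM E' 1).card := Finset.card_le_card hsub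
  | succ r ih =>
    intro c s E' hm hcard
    -- find the column of max degree
    obtain ⟨j, -, hjmax⟩ := Finset.exists_max_image (Finset.univ : Finset (Fin n))
      (fun j => (E'.filter fun p => p.2 = j).card) ⟨⟨0, hn⟩, Finset.mem_univ _⟩
    set degj := (E'.filter fun p => p.2 = j).card with hdegj
    have hsum : E'.card = ∑ b : Fin n, (E'.filter fun p => p.2 = b).card :=
      Finset.card_eq_sum_card_fiberwise (fun p _ => Finset.mem_univ p.2)
    have hmaxsum : E'.card ≤ n * degj := by
      calc E'.card = ∑ b : Fin n, (E'.filter fun p => p.2 = b).card := hsum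
        _ ≤ (Finset.univ : Finset (Fin n)).card • degj :=
            Finset.sum_le_card_nsmul _ _ _ (fun x _ => hjmax x (Finset.mem_univ x))
        _ = n * degj := by simp [Finset.card_univ, smul_eq_mul]
    have hdegm : degj ≤ m := by
      have h1 : (E'.filter fun p => p.2 = j) ⊆
          (Finset.univ : Finset (Fin m)).image (fun a => (a, j)) := by
        intro p hp
        obtain ⟨-, hp2⟩ := Finset.mem_filter.mp hp
        have hpe : p = (p.1, j) := by
          rw [← hp2]
        rw [hpe]
        exact Finset.mem_image_of_mem _ (Finset.mem_univ p.1)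
      calc degj ≤ ((Finset.univ : Finset (Fin m)).image (fun a => (a, j))).card :=
            Finset.card_le_card h1
        _ ≤ (Finset.univ : Finset (Fin m)).card := Finset.card_image_le
        _ = m := by simp
    have hmE : m ≤ E'.card := by
      have : m * 1 ≤ m * (r + 1) := Nat.mul_le_mul_left _ (by omega)
      omega
    have hdegge : c + (r + 2) ≤ degj := by
      have h1 : n * (c + (r + 2)) ≤ n * degj := by
        calc n * (c + (r + 2)) = n * (c + (r + 1 + 1)) := by ring_nf
          _ ≤ m := hm
          _ ≤ E'.card := hmE
          _ ≤ n * degj := hmaxsum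
      exact Nat.le_of_mul_le_mul_left h1 hn
    set E'' := E'.filter (fun p => ¬ p.2 = j) with hE''
    have hsplit : degj + E''.card = E'.card :=
      Finset.card_filter_add_card_filter_not (p := fun p : Fin m × Fin n => p.2 = j)
    have hmulrel : m * (r + 1) = m * r + m := by ring
    have hE''card : s + m * r ≤ E''.card := by omega
    have hIH : s * c ^ r ≤ (rM E'' (r + 1)).card := by
      refine ih c s E'' ?_ hE''card
      calc n * (c + (r + 1)) ≤ n * (c + (r + 1 + 1)) := Nat.mul_le_mul_left _ (by omega)
        _ ≤ m := hm
    set Col := E'.filter (fun p => p.2 = j) with hCol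
    set ext : Finset (Fin m × Fin n) → Finset (Fin m × Fin n) :=
      fun M' => Col.filter (fun p => ∀ q ∈ M', p.1 ≠ q.1) with hext
    have hextcard : ∀ M' ∈ rM E'' (r + 1), c + 1 ≤ (ext M').card := by
      intro M' hM'
      obtain ⟨hsub, hpm, hcardM⟩ := mem_rM.mp hM'
      have hbad : Col.filter (fun p => ¬ ∀ q ∈ M', p.1 ≠ q.1) ⊆
          M'.image (fun q => (q.1, j)) := by
        intro p hp
        obtain ⟨hpCol, hp2⟩ := Finset.mem_filter.mp hp
        push_neg at hp2
        obtain ⟨q, hq, hpq⟩ := hp2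
        refine Finset.mem_image.mpr ⟨q, hq, ?_⟩
        have hpj : p.2 = j := (Finset.mem_filter.mp hpCol).2
        exact Prod.ext hpq.symm hpj.symm
      have hbadcard : (Col.filter (fun p => ¬ ∀ q ∈ M', p.1 ≠ q.1)).card ≤ r + 1 := by
        calc (Col.filter (fun p => ¬ ∀ q ∈ M', p.1 ≠ q.1)).card
            ≤ (M'.image (fun q => (q.1, j))).card := Finset.card_le_card hbad
          _ ≤ M'.card := Finset.card_image_le
          _ = r + 1 := hcardM
      have hColsplit : (ext M').card +
          (Col.filter (fun p => ¬ ∀ q ∈ M', p.1 ≠ q.1)).card = Col.card :=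
        Finset.card_filter_add_card_filter_not (p := fun p : Fin m × Fin n => ∀ q ∈ M', p.1 ≠ q.1)
      have hColcard : Col.card = degj := rfl
      omega
    -- p is not in M', and we can recover M' and p from insert p M'
    have hpnotmem : ∀ M' ∈ rM E'' (r + 1), ∀ p ∈ ext M', p ∉ M' := by
      intro M' hM' p hp hmem
      obtain ⟨hsub, -, -⟩ := mem_rM.mp hM'
      have h1 : p.2 = j := (Finset.mem_filter.mp (Finset.mem_filter.mp hp).1).2
      have h2 : ¬ p.2 = j := (Finset.mem_filter.mp (hsub hmem)).2
      exact h2 h1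
    have hrec : ∀ M' ∈ rM E'' (r + 1), ∀ p ∈ ext M',
        (insert p M').filter (fun q => ¬ q.2 = j) = M' := by
      intro M' hM' p hp
      obtain ⟨hsub, -, -⟩ := mem_rM.mp hM'
      have hpj : p.2 = j := (Finset.mem_filter.mp (Finset.mem_filter.mp hp).1).2
      ext q
      simp only [Finset.mem_filter, Finset.mem_insert]
      constructor
      · rintro ⟨rfl | hq, hq2⟩
        · exact absurd hpj hq2
        · exact hq
      · intro hq
        exact ⟨Or.inr hq, (Finset.mem_filter.mp (hsub hq)).2⟩
    set F : Finset (Fin m × Fin n) → Finset (Finset (Fin m × Fin n)) :=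
      fun M' => (ext M').image (fun p => insert p M') with hF
    have hFsub : ∀ M' ∈ rM E'' (r + 1), F M' ⊆ rM E' (r + 1 + 1) := by
      intro M' hM' P hP
      obtain ⟨p, hp, rfl⟩ := Finset.mem_image.mp hP
      obtain ⟨hsub, hpm, hcardM⟩ := mem_rM.mp hM'
      have hpCol : p ∈ Col := (Finset.mem_filter.mp hp).1
      have hpgood : ∀ q ∈ M', p.1 ≠ q.1 := (Finset.mem_filter.mp hp).2
      have hpj : p.2 = j := (Finset.mem_filter.mp hpCol).2
      refine mem_rM.mpr ⟨?_, ?_, ?_⟩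
      · refine Finset.insert_subset ?_ ?_
        · exact (Finset.mem_filter.mp hpCol).1
        · exact hsub.trans (Finset.filter_subset _ _)
      · intro a ha b hb hab
        rcases Finset.mem_insert.mp ha with rfl | ha' <;>
          rcases Finset.mem_insert.mp hb with rfl | hb'
        · exact absurd rfl hab
        · refine ⟨hpgood b hb', ?_⟩
          have : ¬ b.2 = j := (Finset.mem_filter.mp (hsub hb')).2
          rw [hpj]
          exact fun h => this h.symm
        · refine ⟨(hpgood a ha').symm, ?_⟩
          have : ¬ a.2 = j := (Finset.mem_filter.mp (hsub ha')).2
          rw [hpj]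
          exact fun h => this h
        · exact hpm a ha' b hb' hab
      · rw [Finset.card_insert_of_notMem (hpnotmem M' hM' p hp), hcardM]
    have hFcard : ∀ M' ∈ rM E'' (r + 1), (F M').card = (ext M').card := by
      intro M' hM'
      apply Finset.card_image_of_injOn
      intro p hp p' hp' heq
      have heq2 : insert p M' = insert p' M' := heq
      have hp'mem : p' ∈ insert p M' := by rw [heq2]; exact Finset.mem_insert_self _ _
      rcases Finset.mem_insert.mp hp'mem with h | h
      · exact h.symm
      · exact absurd h (hpnotmem M' hM' p' hp')
    have hdisj : ∀ M1 ∈ rM E'' (r+1), ∀ M2 ∈ rM E'' (r+1), M1 ≠ M2 →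
        Disjoint (F M1) (F M2) := by
      intro M1 h1 M2 h2 hne
      rw [Finset.disjoint_left]
      intro P hP1 hP2
      obtain ⟨p1, hp1, rfl⟩ := Finset.mem_image.mp hP1
      obtain ⟨p2, hp2, heq⟩ := Finset.mem_image.mp hP2
      have heq' : insert p2 M2 = insert p1 M1 := heq
      apply hne
      calc M1 = (insert p1 M1).filter (fun q => ¬ q.2 = j) := (hrec M1 h1 p1 hp1).symm
        _ = (insert p2 M2).filter (fun q => ¬ q.2 = j) := by rw [heq']
        _ = M2 := hrec M2 h2 p2 hp2
    have hbigsub : (rM E'' (r+1)).biUnion F ⊆ rM E' (r + 1 + 1) := by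
      intro P hP
      obtain ⟨M', hM', hPF⟩ := Finset.mem_biUnion.mp hP
      exact hFsub M' hM' hPF
    calc s * c ^ (r + 1) = s * c ^ r * c := by ring
      _ ≤ (rM E'' (r + 1)).card * (c + 1) := Nat.mul_le_mul hIH (by omega)
      _ = (rM E'' (r + 1)).card • (c + 1) := (smul_eq_mul _ _).symm
      _ ≤ ∑ M' ∈ rM E'' (r + 1), (F M').card := by
          apply Finset.card_nsmul_le_sum
          intro M' hM'
          rw [hFcard M' hM']
          exact hextcard M' hM'
      _ = ((rM E'' (r+1)).biUnion F).card := (Finset.card_biUnion hdisj).symm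
      _ ≤ (rM E' (r + 1 + 1)).card := Finset.card_le_card hbigsub

/-! ### Bridge to the matching Kneser graph of the complete bipartite graph -/

def enc {m n : ℕ} (p : Fin m × Fin n) : Sym2 (Fin m ⊕ Fin n) :=
  s(Sum.inl p.1, Sum.inr p.2)

lemma enc_inj {m n : ℕ} : Function.Injective (enc (m := m) (n := n)) := by
  intro p q h
  rw [enc, enc, Sym2.eq_iff] at h
  rcases h with ⟨h1, h2⟩ | ⟨h1, h2⟩
  · exact Prod.ext (Sum.inl.inj h1) (Sum.inr.inj h2)
  · exact absurd h1 (by simp)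

lemma enc_mem_edgeSet {m n : ℕ} (p : Fin m × Fin n) :
    enc p ∈ (completeBipartiteGraph (Fin m) (Fin n)).edgeSet := by
  rw [enc, SimpleGraph.mem_edgeSet]
  simp

lemma edge_form {m n : ℕ} {e : Sym2 (Fin m ⊕ Fin n)}
    (he : e ∈ (completeBipartiteGraph (Fin m) (Fin n)).edgeSet) : ∃ p, e = enc p := by
  induction e with
  | _ u v =>
    rw [SimpleGraph.mem_edgeSet] at he
    rcases u with a | b <;> rcases v with a' | b'
    · simp at he
    · exact ⟨(a, b'), rfl⟩
    · exact ⟨(a', b), Sym2.eq_swap⟩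
    · simp at he

variable {r : ℕ}

/-- The vertex type of the matching Kneser graph of `K_{m,n}`. -/
abbrev KV (m n r : ℕ) := {M : Finset (Sym2 (Fin m ⊕ Fin n)) //
    ↑M ⊆ (completeBipartiteGraph (Fin m) (Fin n)).edgeSet ∧ IsMatchingSet M ∧ M.card = r}

noncomputable def Phi {m n r : ℕ} (A : KV m n r) : Finset (Fin m × Fin n) :=
  A.1.preimage enc (enc_inj.injOn)

lemma mem_Phi {m n r : ℕ} {A : KV m n r} {p : Fin m × Fin n} :
    p ∈ Phi A ↔ enc p ∈ A.1 := Finset.mem_preimage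

lemma Phi_image {m n r : ℕ} (A : KV m n r) : (Phi A).image enc = A.1 := by
  ext e
  constructor
  · intro he
    obtain ⟨p, hp, rfl⟩ := Finset.mem_image.mp he
    exact mem_Phi.mp hp
  · intro he
    obtain ⟨p, rfl⟩ := edge_form (A.2.1 he)
    exact Finset.mem_image.mpr ⟨p, mem_Phi.mpr he, rfl⟩

lemma Phi_card {m n r : ℕ} (A : KV m n r) : (Phi A).card = r := by
  have h := Finset.card_image_of_injective (Phi A) (enc_inj (m := m) (n := n))
  rw [Phi_image A] at h
  rw [← h, A.2.2.2]

lemma Phi_pm {m n r : ℕ} (A : KV m n r) : IsPM (Phi A) := by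
  intro p hp q hq hpq
  have h1 : enc p ∈ A.1 := mem_Phi.mp hp
  have h2 : enc q ∈ A.1 := mem_Phi.mp hq
  have hne : enc p ≠ enc q := fun h => hpq (enc_inj h)
  have hmat := A.2.2.1 (enc p) h1 (enc q) h2 hne
  constructor
  · intro h
    refine hmat (Sum.inl p.1) ?_ ?_
    · rw [enc]; exact Sym2.mem_mk_left _ _
    · rw [enc, h]; exact Sym2.mem_mk_left _ _
  · intro h
    refine hmat (Sum.inr p.2) ?_ ?_
    · rw [enc]; exact Sym2.mem_mk_right _ _
    · rw [enc, h]; exact Sym2.mem_mk_right _ _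

lemma Phi_inj {m n r : ℕ} : Function.Injective (Phi (m := m) (n := n) (r := r)) := by
  intro A B h
  apply Subtype.ext
  rw [← Phi_image A, ← Phi_image B, h]

lemma exists_vertex {m n r : ℕ} {P : Finset (Fin m × Fin n)} (hpm : IsPM P)
    (hc : P.card = r) : ∃ A : KV m n r, Phi A = P := by
  have hsub : ↑(P.image enc) ⊆ (completeBipartiteGraph (Fin m) (Fin n)).edgeSet := by
    intro e he
    rw [Finset.mem_coe, Finset.mem_image] at he
    obtain ⟨p, hp, rfl⟩ := he
    exact enc_mem_edgeSet p
  have hmat : IsMatchingSet (P.image enc) := by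
    intro e he f hf hef v hv hvf
    obtain ⟨p, hp, rfl⟩ := Finset.mem_image.mp he
    obtain ⟨q, hq, rfl⟩ := Finset.mem_image.mp hf
    have hpq : p ≠ q := fun h => hef (by rw [h])
    obtain ⟨hfst, hsnd⟩ := hpm p hp q hq hpq
    rw [enc, Sym2.mem_iff] at hv hvf
    rcases hv with rfl | rfl <;> rcases hvf with h | h
    · exact hfst (Sum.inl.inj h)
    · simp at h
    · simp at h
    · exact hsnd (Sum.inr.inj h)
  have hcard : (P.image enc).card = r := by
    rw [Finset.card_image_of_injective _ enc_inj, hc]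
  refine ⟨⟨P.image enc, hsub, hmat, hcard⟩, ?_⟩
  ext p
  rw [mem_Phi]
  constructor
  · intro h
    obtain ⟨q, hq, hqe⟩ := Finset.mem_image.mp h
    rwa [← enc_inj hqe]
  · intro h
    exact Finset.mem_image_of_mem _ h

lemma card_filterK {m n r : ℕ} (E' : Finset (Fin m × Fin n)) :
    ((Finset.univ : Finset (KV m n r)).filter (fun A => Phi A ⊆ E')).card
      = (rM E' r).card := by
  apply Finset.card_bij (fun A _ => Phi A)
  · intro A hA
    exact mem_rM.mpr ⟨(Finset.mem_filter.mp hA).2, Phi_pm A, Phi_card A⟩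
  · intro A _ B _ h
    exact Phi_inj h
  · intro P hP
    obtain ⟨hsub, hpm, hc⟩ := mem_rM.mp hP
    obtain ⟨A, hA⟩ := exists_vertex hpm hc
    exact ⟨A, Finset.mem_filter.mpr ⟨Finset.mem_univ _, by rw [hA]; exact hsub⟩, hA⟩

lemma encode_inj {k a b a' b' : ℕ} (hb : b < k) (hb' : b' < k)
    (h : a * k + b = a' * k + b') : a = a' ∧ b = b' := by
  have ha : a = a' := by
    rcases Nat.lt_trichotomy a a' with hlt | heq | hgt
    · exfalso
      have h1 : a * k + b < a' * k + b' := by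
        calc a * k + b < a * k + k := by omega
          _ = (a + 1) * k := by ring
          _ ≤ a' * k := Nat.mul_le_mul_right _ (by omega)
          _ ≤ a' * k + b' := Nat.le_add_right _ _
      omega
    · exact heq
    · exfalso
      have h1 : a' * k + b' < a * k + b := by
        calc a' * k + b' < a' * k + k := by omega
          _ = (a' + 1) * k := by ring
          _ ≤ a * k := Nat.mul_le_mul_right _ (by omega)
          _ ≤ a * k + b := Nat.le_add_right _ _
      omega
  subst ha
  omega

set_option maxHeartbeats 2000000 in
/-- Upper bound: the matching Kneser graph is `m(n-r+1)`-colorable. -/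
lemma colorable_upper {m n r : ℕ} (hr : 1 ≤ r) (hnr : r ≤ n) :
    (matchingKG (completeBipartiteGraph (Fin m) (Fin n)) r).Colorable (m * (n - r + 1)) := by
  set k := n - r + 1 with hk
  -- every vertex has an edge with small column index
  have hSA : ∀ A : KV m n r, ((Phi A).filter (fun p => p.2.val < k)).Nonempty := by
    intro A
    rw [Finset.filter_nonempty_iff]
    by_contra h
    push_neg at h
    have hinj : Set.InjOn (fun p : Fin m × Fin n => p.2.val) ↑(Phi A) := by
      intro p hp q hq hpq
      by_contra hne
      exact (Phi_pm A p hp q hq hne).2 (Fin.val_injective hpq)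
    have himg : ((Phi A).image (fun p => p.2.val)).card = r := by
      rw [Finset.card_image_of_injOn hinj, Phi_card]
    have hsub : (Phi A).image (fun p => p.2.val) ⊆ Finset.Ico k n := by
      intro x hx
      obtain ⟨p, hp, rfl⟩ := Finset.mem_image.mp hx
      exact Finset.mem_Ico.mpr ⟨(h p hp), p.2.isLt⟩
    have hle := Finset.card_le_card hsub
    rw [himg, Nat.card_Ico] at hle
    omega
  have hkpos : 0 < k := by omega
  set encv : Fin m × Fin n → ℕ := fun p => p.1.val * k + p.2.val with hencv
  set colval : KV m n r → ℕ := fun A =>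
    (((Phi A).filter (fun p => p.2.val < k)).image encv).min'
      (Finset.Nonempty.image (hSA A) _) with hcolval
  have hattain : ∀ A : KV m n r, ∃ p ∈ Phi A, p.2.val < k ∧ encv p = colval A := by
    intro A
    have hmem := Finset.min'_mem (((Phi A).filter (fun p => p.2.val < k)).image encv)
      (Finset.Nonempty.image (hSA A) _)
    obtain ⟨p, hp, hpe⟩ := Finset.mem_image.mp hmem
    obtain ⟨hp1, hp2⟩ := Finset.mem_filter.mp hp
    exact ⟨p, hp1, hp2, hpe⟩
  have hbound : ∀ A : KV m n r, colval A < m * k := by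
    intro A
    obtain ⟨p, hp, hp2, hpe⟩ := hattain A
    rw [← hpe, hencv]
    calc p.1.val * k + p.2.val < p.1.val * k + k := by omega
      _ = (p.1.val + 1) * k := by ring
      _ ≤ m * k := Nat.mul_le_mul_right _ (by omega)
  refine ⟨SimpleGraph.Coloring.mk (fun A => (⟨colval A, hbound A⟩ : Fin (m * k))) ?_⟩
  intro A B hadj
  intro hcontra
  have hceq : colval A = colval B := by
    simpa using congrArg Fin.val hcontra
  obtain ⟨p, hp, hp2, hpe⟩ := hattain A
  obtain ⟨q, hq, hq2, hqe⟩ := hattain B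
  have hpq : p = q := by
    have h1 : encv p = encv q := by rw [hpe, hqe, hceq]
    rw [hencv] at h1
    obtain ⟨h1, h2⟩ := encode_inj hp2 hq2 h1
    exact Prod.ext (Fin.val_injective h1) (Fin.val_injective h2)
  subst hpq
  have h1 : enc p ∈ A.1 := mem_Phi.mp hp
  have h2 : enc p ∈ B.1 := mem_Phi.mp hq
  have hdisj : Disjoint A.1 B.1 := hadj.1
  exact Finset.disjoint_left.mp hdisj h1 h2

/-- Numeric helper for the lower bound. -/
lemma numeric_help (n r' m : ℕ) (hn : 0 < n) (hr' : 1 ≤ r')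
    (hm0 : (n*2)*((r'+1)^2*(4*n^2)^(r'-1) + 2) + 2*n*(r'+1) + 1 ≤ m) :
    (r'+1)^2 * (m*n)^(r'-1) + 1 ≤ (m / n - (r'+1)) ^ r' := by
  set K0 := (r'+1)^2*(4*n^2)^(r'-1) + 1 with hK0
  set t0 := m / (n*2) with ht0
  have hK0pos : 1 ≤ K0 := by omega
  have h2r : 2*(r'+1) ≤ m / n := by
    rw [Nat.le_div_iff_mul_le hn]
    have e1 : 2*(r'+1)*n = 2*n*(r'+1) := by ring
    omega
  have hc_t0 : t0 ≤ m / n - (r'+1) := by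
    have hdd : m / n / 2 = t0 := by rw [ht0, Nat.div_div_eq_div_mul]
    omega
  have ht0K : K0 + 1 ≤ t0 := by
    rw [ht0, Nat.le_div_iff_mul_le (by omega : 0 < n*2)]
    have e2 : (K0+1)*(n*2) = (n*2)*((r'+1)^2*(4*n^2)^(r'-1) + 2) := by rw [hK0]; ring
    omega
  have ht0pos : 1 ≤ t0 := by omega
  have hm4 : m ≤ n*4*t0 := by
    have hdm := Nat.div_add_mod m (n*2)
    have hmod : m % (n*2) < n*2 := Nat.mod_lt _ (by omega)
    have e3 : n*4*t0 = (n*2)*(m/(n*2)) + (n*2)*(m/(n*2)) := by rw [← ht0]; ring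
    have e4 : n*2 ≤ (n*2)*(m/(n*2)) := Nat.le_mul_of_pos_right _ (by omega)
    omega
  have hmn : m*n ≤ (4*n^2)*t0 := by
    have h5 := Nat.mul_le_mul_right n hm4
    have e5 : n*4*t0*n = 4*n^2*t0 := by ring
    omega
  have hpow : (m*n)^(r'-1) ≤ (4*n^2)^(r'-1) * t0^(r'-1) := by
    calc (m*n)^(r'-1) ≤ ((4*n^2)*t0)^(r'-1) := Nat.pow_le_pow_left hmn _
      _ = (4*n^2)^(r'-1) * t0^(r'-1) := mul_pow _ _ _
  have ht0pow : 1 ≤ t0^(r'-1) := Nat.one_le_pow _ _ (by omega)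
  calc (r'+1)^2 * (m*n)^(r'-1) + 1
      ≤ (r'+1)^2 * ((4*n^2)^(r'-1) * t0^(r'-1)) + t0^(r'-1) := by
        have h6 := Nat.mul_le_mul_left ((r'+1)^2) hpow
        omega
    _ = K0 * t0^(r'-1) := by rw [hK0]; ring
    _ ≤ t0 * t0^(r'-1) := Nat.mul_le_mul_right _ (by omega)
    _ = t0^(r'-1+1) := by rw [pow_succ, mul_comm]
    _ = t0^r' := by congr 1; omega
    _ ≤ (m / n - (r'+1))^r' := Nat.pow_le_pow_left hc_t0 _

/-- Lower bound: the matching Kneser graph is not `(m(n-r+1)-1)`-colorable. -/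
lemma not_colorable {m n r : ℕ} (hr : 1 ≤ r) (hnr : r ≤ n) (hnm : n ≤ m)
    (hm0 : (n*2)*(r^2*(4*n^2)^(r-2) + 2) + 2*n*r + 1 ≤ m) :
    ¬ (matchingKG (completeBipartiteGraph (Fin m) (Fin n)) r).Colorable
      (m * (n - r + 1) - 1) := by
  have hn : 0 < n := by omega
  have hm : 0 < m := by omega
  obtain ⟨r', rfl⟩ : ∃ r', r = r' + 1 := ⟨r - 1, by omega⟩
  rintro ⟨C⟩
  set t := m * (n - (r'+1) + 1) - 1 with ht
  -- star colors and their centers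
  have hchoice : ∀ i : Fin t, ∃ p : Fin m × Fin n,
      (∃ p' : Fin m × Fin n, ∀ A : KV m n (r'+1), C A = i → enc p' ∈ A.1) →
      ∀ A : KV m n (r'+1), C A = i → enc p ∈ A.1 := by
    intro i
    by_cases h : ∃ p' : Fin m × Fin n, ∀ A : KV m n (r'+1), C A = i → enc p' ∈ A.1
    · obtain ⟨p, hp⟩ := h
      exact ⟨p, fun _ => hp⟩
    · exact ⟨(⟨0, hm⟩, ⟨0, hn⟩), fun hs => absurd hs h⟩
  choose f hf using hchoice
  set SC := (Finset.univ : Finset (Fin t)).filter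
    (fun i => ∃ p' : Fin m × Fin n, ∀ A : KV m n (r'+1), C A = i → enc p' ∈ A.1) with hSC
  set NC := (Finset.univ : Finset (Fin t)).filter
    (fun i => ¬ ∃ p' : Fin m × Fin n, ∀ A : KV m n (r'+1), C A = i → enc p' ∈ A.1) with hNC
  set q := NC.card with hq
  set S := SC.image f with hS
  set E' := (Finset.univ : Finset (Fin m × Fin n)) \ S with hE'
  have hSCq : SC.card + q = t := by
    rw [hq, hNC, hSC]
    rw [Finset.card_filter_add_card_filter_not]
    simp
  have hScard : S.card ≤ SC.card := Finset.card_image_le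
  have hE'card : E'.card = m * n - S.card := by
    rw [hE', Finset.card_sdiff_of_subset (Finset.subset_univ _)]
    congr 1
    simp
  have hid : m * (n - (r'+1) + 1) + m * r' = m * n := by
    rw [← Nat.mul_add]
    congr 1
    omega
  have hNpos : 1 ≤ m * (n - (r'+1) + 1) := Nat.mul_pos hm (by omega)
  have hE'big : (q + 1) + m * r' ≤ E'.card := by omega
  set c := m / n - (r'+1) with hc
  have h2nr : n * (r'+1) ≤ m := by
    have e1 : 2*n*(r'+1) = n*(r'+1) + n*(r'+1) := by ring
    omega
  have hcond : n * (c + (r' + 1)) ≤ m := by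
    rcases le_or_gt (r'+1) (m / n) with h | h
    · have he : c + (r'+1) = m / n := by omega
      rw [he]
      calc n * (m / n) = m / n * n := mul_comm _ _
        _ ≤ m := Nat.div_mul_le_self m n
    · have he : c = 0 := by omega
      rw [he]
      simpa using h2nr
  have hlow := supersat hn r' c (q+1) E' hcond hE'big
  set filterK := (Finset.univ : Finset (KV m n (r'+1))).filter (fun A => Phi A ⊆ E')
    with hfilterK
  have htrans : filterK.card = (rM E' (r'+1)).card := card_filterK E'
  have hA_nonstar : ∀ A : KV m n (r'+1), Phi A ⊆ E' →
      ¬ ∃ p' : Fin m × Fin n, ∀ B : KV m n (r'+1), C B = C A → enc p' ∈ B.1 := by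
    intro A hAE hstar
    have hP : enc (f (C A)) ∈ A.1 := hf (C A) hstar A rfl
    have hmem : f (C A) ∈ Phi A := mem_Phi.mpr hP
    have hinS : f (C A) ∈ S := by
      rw [hS]
      refine Finset.mem_image_of_mem f ?_
      rw [hSC]
      exact Finset.mem_filter.mpr ⟨Finset.mem_univ _, hstar⟩
    have hmem2 := hAE hmem
    rw [hE'] at hmem2
    exact (Finset.mem_sdiff.mp hmem2).2 hinS
  set g : Fin t → Finset (KV m n (r'+1)) := fun i =>
    (Finset.univ : Finset (KV m n (r'+1))).filter (fun A => C A = i ∧ Phi A ⊆ E') with hg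
  have hcover : filterK ⊆ NC.biUnion g := by
    intro A hA
    have h1 : Phi A ⊆ E' := (Finset.mem_filter.mp hA).2
    refine Finset.mem_biUnion.mpr ⟨C A, ?_, ?_⟩
    · rw [hNC]
      exact Finset.mem_filter.mpr ⟨Finset.mem_univ _, hA_nonstar A h1⟩
    · rw [hg]
      exact Finset.mem_filter.mpr ⟨Finset.mem_univ _, rfl, h1⟩
  set Br := if r' = 0 then 0 else (r'+1)^2 * (m*n)^(r'-1) with hBr
  have hclass : ∀ i ∈ NC, (g i).card ≤ Br := by
    intro i hiNC
    have hnonstar : ¬ ∃ p' : Fin m × Fin n, ∀ A : KV m n (r'+1), C A = i → enc p' ∈ A.1 := by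
      rw [hNC] at hiNC
      exact (Finset.mem_filter.mp hiNC).2
    set cls := (Finset.univ : Finset (KV m n (r'+1))).filter (fun A => C A = i) with hcls
    have hsubcls : g i ⊆ cls := by
      intro A hA
      rw [hg] at hA
      rw [hcls]
      exact Finset.mem_filter.mpr ⟨Finset.mem_univ _, (Finset.mem_filter.mp hA).2.1⟩
    refine le_trans (Finset.card_le_card hsubcls) ?_
    rcases Finset.eq_empty_or_nonempty cls with hemp | ⟨M0, hM0⟩
    · rw [hemp]
      simp
    · have hmeet : ∀ A ∈ cls, ∀ B ∈ cls, ∃ p, p ∈ Phi A ∧ p ∈ Phi B := by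
        intro A hA B hB
        rcases eq_or_ne A B with rfl | hne
        · have hpos : 0 < (Phi A).card := by rw [Phi_card]; omega
          obtain ⟨p, hp⟩ := Finset.card_pos.mp hpos
          exact ⟨p, hp, hp⟩
        · have hCeq : C A = C B := by
            rw [hcls] at hA hB
            rw [(Finset.mem_filter.mp hA).2, (Finset.mem_filter.mp hB).2]
          have hndis : ¬ Disjoint A.1 B.1 := by
            intro hdis
            exact C.valid (⟨hdis, hne⟩ :
              (matchingKG (completeBipartiteGraph (Fin m) (Fin n)) (r'+1)).Adj A B) hCeq
          obtain ⟨e, heA, heB⟩ := Finset.not_disjoint_iff.mp hndis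
          obtain ⟨p, rfl⟩ := edge_form (A.2.1 heA)
          exact ⟨p, mem_Phi.mpr heA, mem_Phi.mpr heB⟩
      have hW : ∀ p : Fin m × Fin n, ∃ B : KV m n (r'+1), C B = i ∧ enc p ∉ B.1 := by
        intro p
        push_neg at hnonstar
        obtain ⟨B, hB1, hB2⟩ := hnonstar p
        exact ⟨B, hB1, hB2⟩
      choose W hW1 hW2 using hW
      have hWcls : ∀ p, W p ∈ cls := fun p =>
        Finset.mem_filter.mpr ⟨Finset.mem_univ _, hW1 p⟩
      rcases Nat.eq_zero_or_pos r' with hr0 | hr'pos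
      · exfalso
        subst hr0
        have hpos : 0 < (Phi M0).card := by rw [Phi_card]; omega
        obtain ⟨p, hp⟩ := Finset.card_pos.mp hpos
        apply hnonstar
        refine ⟨p, fun A hCA => ?_⟩
        have hA : A ∈ cls := Finset.mem_filter.mpr ⟨Finset.mem_univ _, hCA⟩
        obtain ⟨p', hp'A, hp'M0⟩ := hmeet A hA M0 hM0
        obtain ⟨a, ha⟩ := Finset.card_eq_one.mp (Phi_card A)
        obtain ⟨b, hb⟩ := Finset.card_eq_one.mp (Phi_card M0)
        rw [ha] at hp'A
        rw [hb] at hp'M0 hp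
        have h1 : p' = a := Finset.mem_singleton.mp hp'A
        have h2 : p' = b := Finset.mem_singleton.mp hp'M0
        have h3 : p = b := Finset.mem_singleton.mp hp
        have hpa : p ∈ Phi A := by
          rw [ha, Finset.mem_singleton, h3, ← h2, h1]
        exact mem_Phi.mp hpa
      · have hcover2 : cls ⊆ (Phi M0).biUnion (fun p => (Phi (W p)).biUnion (fun p' =>
            (Finset.univ : Finset (KV m n (r'+1))).filter
              (fun A => p ∈ Phi A ∧ p' ∈ Phi A ∧ p ≠ p'))) := by
          intro A hA
          obtain ⟨p, hpA, hpM0⟩ := hmeet A hA M0 hM0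
          obtain ⟨p', hp'A, hp'W⟩ := hmeet A hA (W p) (hWcls p)
          have hpp' : p ≠ p' := by
            intro h
            rw [← h] at hp'W
            exact hW2 p (mem_Phi.mp hp'W)
          exact Finset.mem_biUnion.mpr ⟨p, hpM0, Finset.mem_biUnion.mpr ⟨p', hp'W,
            Finset.mem_filter.mpr ⟨Finset.mem_univ _, hpA, hp'A, hpp'⟩⟩⟩
        have hpair : ∀ p p' : Fin m × Fin n,
            ((Finset.univ : Finset (KV m n (r'+1))).filter
              (fun A => p ∈ Phi A ∧ p' ∈ Phi A ∧ p ≠ p')).card ≤ (m*n)^(r'-1) := by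
          intro p p'
          have hmapsto : ∀ A ∈ (Finset.univ : Finset (KV m n (r'+1))).filter
              (fun A => p ∈ Phi A ∧ p' ∈ Phi A ∧ p ≠ p'),
              ((Phi A).erase p).erase p' ∈
                (Finset.univ : Finset (Fin m × Fin n)).powersetCard (r'-1) := by
            intro A hA
            obtain ⟨-, hpA, hp'A, hpp'⟩ := Finset.mem_filter.mp hA
            refine Finset.mem_powersetCard.mpr ⟨Finset.subset_univ _, ?_⟩
            rw [Finset.card_erase_of_mem (Finset.mem_erase.mpr ⟨Ne.symm hpp', hp'A⟩),
              Finset.card_erase_of_mem hpA, Phi_card]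
            omega
          have hrecover : ∀ A ∈ (Finset.univ : Finset (KV m n (r'+1))).filter
              (fun A => p ∈ Phi A ∧ p' ∈ Phi A ∧ p ≠ p'),
              insert p (insert p' (((Phi A).erase p).erase p')) = Phi A := by
            intro A hA
            obtain ⟨-, hpA, hp'A, hpp'⟩ := Finset.mem_filter.mp hA
            rw [Finset.insert_erase (Finset.mem_erase.mpr ⟨Ne.symm hpp', hp'A⟩),
              Finset.insert_erase hpA]
          have hinj : Set.InjOn (fun A : KV m n (r'+1) => ((Phi A).erase p).erase p')
              ↑((Finset.univ : Finset (KV m n (r'+1))).filter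
                (fun A => p ∈ Phi A ∧ p' ∈ Phi A ∧ p ≠ p')) := by
            intro A hA B hB hAB
            simp only [Finset.coe_filter] at hA hB
            apply Phi_inj
            rw [← hrecover A (Finset.mem_filter.mpr ⟨Finset.mem_univ _, hA.2⟩),
              ← hrecover B (Finset.mem_filter.mpr ⟨Finset.mem_univ _, hB.2⟩)]
            simp only at hAB
            rw [hAB]
          calc ((Finset.univ : Finset (KV m n (r'+1))).filter
                (fun A => p ∈ Phi A ∧ p' ∈ Phi A ∧ p ≠ p')).card
              ≤ ((Finset.univ : Finset (Fin m × Fin n)).powersetCard (r'-1)).card :=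
                Finset.card_le_card_of_injOn _ hmapsto hinj
            _ = (m*n).choose (r'-1) := by
                rw [Finset.card_powersetCard]
                congr 1
                simp
            _ ≤ (m*n)^(r'-1) := Nat.choose_le_pow _ _
        calc cls.card
            ≤ ∑ p ∈ Phi M0, ((Phi (W p)).biUnion (fun p' =>
                (Finset.univ : Finset (KV m n (r'+1))).filter
                  (fun A => p ∈ Phi A ∧ p' ∈ Phi A ∧ p ≠ p'))).card :=
              le_trans (Finset.card_le_card hcover2) Finset.card_biUnion_le
          _ ≤ ∑ p ∈ Phi M0, (r'+1) * (m*n)^(r'-1) := by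
              refine Finset.sum_le_sum ?_
              intro p hp
              have h1 := Finset.card_biUnion_le_card_mul (Phi (W p))
                (fun p' => (Finset.univ : Finset (KV m n (r'+1))).filter
                  (fun A => p ∈ Phi A ∧ p' ∈ Phi A ∧ p ≠ p')) ((m*n)^(r'-1))
                (fun p' _ => hpair p p')
              rw [Phi_card] at h1
              exact h1
          _ = (r'+1) * ((r'+1) * (m*n)^(r'-1)) := by
              rw [Finset.sum_const, Phi_card, smul_eq_mul]
          _ = Br := by
              rw [hBr, if_neg (by omega)]
              ring
  have hup : filterK.card ≤ q * Br := by
    calc filterK.card ≤ (NC.biUnion g).card := Finset.card_le_card hcover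
      _ ≤ NC.card * Br := Finset.card_biUnion_le_card_mul _ _ _ hclass
      _ = q * Br := by rw [hq]
  have hnum : Br + 1 ≤ c ^ r' := by
    rcases Nat.eq_zero_or_pos r' with hr0 | hr'pos
    · subst hr0
      rw [hBr]
      simp
    · rw [hBr, if_neg (by omega), hc]
      have hmm0 : (n*2)*((r'+1)^2*(4*n^2)^(r'-1) + 2) + 2*n*(r'+1) + 1 ≤ m := by
        have he : (r'+1) - 2 = r' - 1 := by omega
        rw [he] at hm0
        exact hm0
      exact numeric_help n r' m hn hr'pos hmm0
  have hfinal : (q+1) * c^r' ≤ q * Br := by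
    calc (q+1) * c^r' ≤ (rM E' (r'+1)).card := hlow
      _ = filterK.card := htrans.symm
      _ ≤ q * Br := hup
  have h2 : (q+1) * (Br+1) ≤ (q+1) * c^r' := Nat.mul_le_mul_left _ hnum
  have h3 : (q+1) * (Br+1) = q*Br + Br + q + 1 := by ring
  omega

end MKG

/-- For n ≥ r ≥ 1 there exists m₀ such that for all m ≥ n with m ≥ m₀,
χ(KG(K_{m,n}, rK₂)) = m(n − r + 1). -/
theorem stmt_12 (n r : ℕ) (hr : 1 ≤ r) (hnr : r ≤ n) :
    ∃ m0 : ℕ, 0 < m0 ∧ ∀ m : ℕ, n ≤ m → m0 ≤ m →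
      (matchingKG (completeBipartiteGraph (Fin m) (Fin n)) r).chromaticNumber
        = ((m * (n - r + 1) : ℕ) : ℕ∞) := by
  refine ⟨(n*2)*(r^2*(4*n^2)^(r-2) + 2) + 2*n*r + 1, Nat.succ_pos _, ?_⟩
  intro m hnm hm0
  have hup := MKG.colorable_upper (m := m) hr hnr
  have hlow := MKG.not_colorable hr hnr hnm hm0
  have h1 : (matchingKG (completeBipartiteGraph (Fin m) (Fin n)) r).chromaticNumber
      ≤ ((m * (n - r + 1) : ℕ) : ℕ∞) := hup.chromaticNumber_le
  refine le_antisymm h1 ?_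
  by_contra hlt
  have hlt' : (matchingKG (completeBipartiteGraph (Fin m) (Fin n)) r).chromaticNumber
      < ((m * (n - r + 1) : ℕ) : ℕ∞) := lt_of_not_ge hlt
  have hNpos : 1 ≤ m * (n - r + 1) := Nat.mul_pos (by omega) (by omega)
  have hsplit : m * (n - r + 1) = (m * (n - r + 1) - 1) + 1 := by omega
  rw [hsplit] at hlt'
  have hcast : ((m * (n - r + 1) - 1 + 1 : ℕ) : ℕ∞)
      = ((m * (n - r + 1) - 1 : ℕ) : ℕ∞) + 1 := by
    push_cast
    ring
  rw [hcast] at hlt'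
  have hle : (matchingKG (completeBipartiteGraph (Fin m) (Fin n)) r).chromaticNumber
      ≤ ((m * (n - r + 1) - 1 : ℕ) : ℕ∞) :=
    (ENat.lt_add_one_iff (ENat.coe_ne_top _)).mp hlt'
  exact hlow (SimpleGraph.chromaticNumber_le_iff_colorable.mp hle)
end

section
/- Let m, n, r be positive integers with m ≥ n ≥ r. Then ex(K_{m,n}, rK_2) = (r − 1)m, i.e., the maximum number of edges of a spanning subgraph of the complete bipartite graph K_{m,n} containing no matching of size r is (r − 1)m. -/
open SimpleGraph

namespace Stmt15Aux

open Finset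

variable {m n r : ℕ}


/-- Embed a pair into an edge of the complete bipartite graph. -/
def emb (p : Fin m × Fin n) : Sym2 (Fin m ⊕ Fin n) := s(Sum.inl p.1, Sum.inr p.2)

lemma emb_inj : Function.Injective (emb (m := m) (n := n)) := by
  intro p q h
  simp only [emb, Sym2.eq_iff] at h
  rcases h with ⟨h1, h2⟩ | ⟨h1, h2⟩
  · exact Prod.ext (Sum.inl_injective h1) (Sum.inr_injective h2)
  · exact absurd h1 (by simp)

lemma mem_emb {p : Fin m × Fin n} {v : Fin m ⊕ Fin n} :
    v ∈ emb p ↔ v = Sum.inl p.1 ∨ v = Sum.inr p.2 := by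
  simp [emb]

lemma mem_edgeSet_iff (e : Sym2 (Fin m ⊕ Fin n)) :
    e ∈ (completeBipartiteGraph (Fin m) (Fin n)).edgeSet ↔ ∃ p : Fin m × Fin n, e = emb p := by
  induction e using Sym2.ind with
  | _ x y =>
    simp only [mem_edgeSet, completeBipartiteGraph_adj]
    constructor
    · rintro (⟨hx, hy⟩ | ⟨hx, hy⟩)
      · obtain ⟨a, rfl⟩ := Sum.isLeft_iff.mp hx
        obtain ⟨b, rfl⟩ := Sum.isRight_iff.mp hy
        exact ⟨(a, b), rfl⟩
      · obtain ⟨b, rfl⟩ := Sum.isRight_iff.mp hx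
        obtain ⟨a, rfl⟩ := Sum.isLeft_iff.mp hy
        exact ⟨(a, b), Sym2.eq_swap⟩
    · rintro ⟨p, hp⟩
      rw [emb, Sym2.eq_iff] at hp
      rcases hp with ⟨rfl, rfl⟩ | ⟨rfl, rfl⟩ <;> simp


lemma key (hr : 1 ≤ r) (hnr : r ≤ n) (hmn : n ≤ m) (P : Finset (Fin m × Fin n))
    (hP : ∀ Q ⊆ P, (∀ p ∈ Q, ∀ q ∈ Q, p ≠ q → p.1 ≠ q.1 ∧ p.2 ≠ q.2) → Q.card ≠ r) :
    P.card ≤ (r - 1) * m := by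
  classical
  set N : Fin n → Finset (Fin m) := fun b => (P.filter (fun p => p.2 = b)).image Prod.fst with hN
  have hfiber : ∀ b, (P.filter (fun p => p.2 = b)).card = (N b).card := by
    intro b
    rw [hN, Finset.card_image_of_injOn]
    intro p hp q hq h
    simp only [Finset.coe_filter, Set.mem_setOf_eq] at hp hq
    exact Prod.ext h (hp.2.trans hq.2.symm)
  have hPcard : P.card = ∑ b : Fin n, (N b).card := by
    rw [Finset.card_eq_sum_card_fiberwise (fun p _ => Finset.mem_univ p.2)]
    exact Finset.sum_congr rfl fun b _ => hfiber b
  have hNm : ∀ b, (N b).card ≤ m := fun b => by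
    simpa using Finset.card_le_card (Finset.subset_univ (N b))
  by_cases hHall : ∀ S : Finset (Fin n), S.card ≤ (S.biUnion N).card + (n - r)
  · -- Hall condition: build a matching of size r, contradiction
    exfalso
    have hm0 : 0 < m := lt_of_lt_of_le (lt_of_lt_of_le hr hnr) hmn
    set t : Fin n → Finset (Fin m ⊕ Fin (n - r)) :=
      fun b => (N b).image Sum.inl ∪ (univ : Finset (Fin (n - r))).image Sum.inr with ht
    have hcond : ∀ S : Finset (Fin n), S.card ≤ (S.biUnion t).card := by
      intro S
      rcases S.eq_empty_or_nonempty with rfl | hS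
      · simp
      have hU : S.biUnion t = (S.biUnion N).image Sum.inl ∪
          (univ : Finset (Fin (n - r))).image Sum.inr := by
        ext x
        simp only [mem_biUnion, ht, mem_union, mem_image, mem_univ, true_and]
        constructor
        · rintro ⟨b, hb, h | h⟩
          · obtain ⟨a, ha, rfl⟩ := h
            exact Or.inl ⟨a, ⟨b, hb, ha⟩, rfl⟩
          · exact Or.inr h
        · rintro (⟨a, ⟨b, hb, ha⟩, rfl⟩ | h)
          · exact ⟨b, hb, Or.inl ⟨a, ha, rfl⟩⟩
          · exact ⟨hS.choose, hS.choose_spec, Or.inr h⟩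
      rw [hU, Finset.card_union_of_disjoint, Finset.card_image_of_injective _ Sum.inl_injective,
        Finset.card_image_of_injective _ Sum.inr_injective]
      · simpa using hHall S
      · simp [Finset.disjoint_left]
    obtain ⟨f, hfinj, hft⟩ := (Finset.all_card_le_biUnion_card_iff_exists_injective t).mp hcond
    -- at least r vertices map to the left
    set R₀ : Finset (Fin n) := univ.filter (fun b => (f b).isLeft) with hR₀
    have hR₀card : r ≤ R₀.card := by
      have hcompl : (univ.filter (fun b => ¬ (f b).isLeft)).card ≤ n - r := by
        calc (univ.filter (fun b => ¬ (f b).isLeft)).card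
            ≤ ((univ : Finset (Fin (n - r))).image Sum.inr : Finset (Fin m ⊕ Fin (n - r))).card := by
              apply Finset.card_le_card_of_injOn f
              · intro b hb
                simp only [Finset.mem_coe, mem_filter, Sum.not_isLeft, Sum.isRight_iff] at hb
                obtain ⟨c, hc⟩ := hb.2
                simp [hc]
              · exact fun x _ y _ h => hfinj h
          _ = n - r := by
              rw [Finset.card_image_of_injective _ Sum.inr_injective]; simp
      have := Finset.card_filter_add_card_filter_not
        (s := (univ : Finset (Fin n))) (p := fun b => (f b).isLeft)
      simp only [Finset.card_univ, Fintype.card_fin] at this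
      rw [hR₀]
      omega
    obtain ⟨R, hRsub, hRcard⟩ := Finset.exists_subset_card_eq hR₀card
    -- extract the left components
    set g : Fin n → Fin m := fun b => ((f b).getLeft?).getD ⟨0, hm0⟩ with hg
    have hgb : ∀ b ∈ R, f b = Sum.inl (g b) := by
      intro b hb
      have hb' := hRsub hb
      simp only [hR₀, mem_filter, Sum.isLeft_iff] at hb'
      obtain ⟨a, ha⟩ := hb'.2
      simp [hg, ha]
    set Q : Finset (Fin m × Fin n) := R.image (fun b => (g b, b)) with hQ
    have hQsub : Q ⊆ P := by
      intro p hp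
      simp only [hQ, mem_image] at hp
      obtain ⟨b, hb, rfl⟩ := hp
      have hmem := hft b
      rw [hgb b hb] at hmem
      simp only [ht, mem_union, mem_image] at hmem
      rcases hmem with ⟨a, ha, haeq⟩ | ⟨c, _, hc⟩
      · have : a = g b := Sum.inl_injective haeq
        subst this
        simp only [hN, mem_image, mem_filter] at ha
        obtain ⟨p, ⟨hpP, hp2⟩, hp1⟩ := ha
        have : p = (g b, b) := Prod.ext hp1 hp2
        rwa [← this]
      · exact absurd hc (by simp)
    have hQmatch : ∀ p ∈ Q, ∀ q ∈ Q, p ≠ q → p.1 ≠ q.1 ∧ p.2 ≠ q.2 := by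
      intro p hp q hq hpq
      simp only [hQ, mem_image] at hp hq
      obtain ⟨b, hb, rfl⟩ := hp
      obtain ⟨b', hb', rfl⟩ := hq
      have hbb : b ≠ b' := fun h => hpq (by rw [h])
      refine ⟨fun h => hbb ?_, hbb⟩
      apply hfinj
      rw [hgb b hb, hgb b' hb']
      exact congrArg Sum.inl h
    have hQcard : Q.card = r := by
      rw [hQ, Finset.card_image_of_injOn, hRcard]
      intro x _ y _ h
      exact (Prod.ext_iff.mp h).2
    exact hP Q hQsub hQmatch hQcard
  · push_neg at hHall
    obtain ⟨S, hS⟩ := hHall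
    set s := S.card with hs
    set A := (S.biUnion N).card with hA
    have hsn : s ≤ n := by simpa using Finset.card_le_card (Finset.subset_univ S)
    -- bound the sum
    have hsum : P.card ≤ s * A + (n - s) * m := by
      rw [hPcard, ← Finset.sum_add_sum_compl S]
      have h1 : ∑ b ∈ S, (N b).card ≤ s * A := by
        calc ∑ b ∈ S, (N b).card ≤ ∑ _b ∈ S, A := by
              apply Finset.sum_le_sum
              intro b hb
              exact Finset.card_le_card (Finset.subset_biUnion_of_mem N hb)
          _ = s * A := by rw [Finset.sum_const, smul_eq_mul]
      have h2 : ∑ b ∈ Sᶜ, (N b).card ≤ (n - s) * m := by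
        calc ∑ b ∈ Sᶜ, (N b).card ≤ ∑ _b ∈ Sᶜ, m := Finset.sum_le_sum fun b _ => hNm b
          _ = (n - s) * m := by
              rw [Finset.sum_const, smul_eq_mul, Finset.card_compl]
              simp [hs]
      omega
    -- arithmetic
    have ht : n - r + r = n := by omega
    have hslb : n - r < s := by omega
    obtain ⟨B, hB⟩ : ∃ B, s = (n - r) + 1 + B ∧ A ≤ B := by
      refine ⟨s - (n - r) - 1, by omega, by omega⟩
    have hk : (n - s) + B = r - 1 := by omega
    calc P.card ≤ s * A + (n - s) * m := hsum
      _ ≤ m * B + (n - s) * m := by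
          have : s * A ≤ m * B := Nat.mul_le_mul (by omega) hB.2
          omega
      _ = ((n - s) + B) * m := by ring
      _ = (r - 1) * m := by rw [hk]


/-- Upper bound: any admissible edge set has at most (r-1)m edges. -/
lemma upper (hr : 1 ≤ r) (hnr : r ≤ n) (hmn : n ≤ m) (E' : Finset (Sym2 (Fin m ⊕ Fin n)))
    (hsub : ↑E' ⊆ (completeBipartiteGraph (Fin m) (Fin n)).edgeSet)
    (hmat : ∀ M ⊆ E', IsMatchingSet M → M.card ≠ r) :
    E'.card ≤ (r - 1) * m := by
  classical
  set P : Finset (Fin m × Fin n) := univ.filter (fun p => emb p ∈ E') with hPdef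
  have hE' : E' = P.image emb := by
    ext e
    simp only [hPdef, mem_image, mem_filter, mem_univ, true_and]
    constructor
    · intro he
      obtain ⟨p, rfl⟩ := (mem_edgeSet_iff e).mp (hsub he)
      exact ⟨p, he, rfl⟩
    · rintro ⟨p, hp, rfl⟩
      exact hp
  have hcard : E'.card = P.card := by
    rw [hE', Finset.card_image_of_injective _ emb_inj]
  rw [hcard]
  apply key hr hnr hmn
  intro Q hQP hQ hQr
  apply hmat (Q.image emb) ?_ ?_ ?_
  · intro e he
    simp only [mem_image] at he
    obtain ⟨p, hp, rfl⟩ := he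
    have := hQP hp
    simp only [hPdef, mem_filter] at this
    exact this.2
  · intro e he f hf hef v hv
    simp only [mem_image] at he hf
    obtain ⟨p, hp, rfl⟩ := he
    obtain ⟨q, hq, rfl⟩ := hf
    have hpq : p ≠ q := fun h => hef (by rw [h])
    obtain ⟨h1, h2⟩ := hQ p hp q hq hpq
    rw [mem_emb] at hv ⊢
    rcases hv with rfl | rfl
    · rintro (h | h)
      · exact h1 (Sum.inl_injective h)
      · exact absurd h (by simp)
    · rintro (h | h)
      · exact absurd h (by simp)
      · exact h2 (Sum.inr_injective h)
  · rw [Finset.card_image_of_injective _ emb_inj, hQr]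

lemma card_filter_lt (k : ℕ) (h : k ≤ n) :
    (univ.filter (fun b : Fin n => (b : ℕ) < k)).card = k := by
  have heq : univ.filter (fun b : Fin n => (b : ℕ) < k) =
      Finset.map (Fin.castLEEmb h) univ := by
    ext b
    simp only [mem_filter, mem_univ, true_and, Finset.mem_map]
    constructor
    · intro hb
      exact ⟨⟨b, hb⟩, rfl⟩
    · rintro ⟨a, rfl⟩
      exact a.isLt
  rw [heq, Finset.card_map, Finset.card_univ, Fintype.card_fin]

/-- Lower bound: the extremal construction. -/
lemma lower (hr : 1 ≤ r) (hnr : r ≤ n) (hmn : n ≤ m) :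
    ∃ E' : Finset (Sym2 (Fin m ⊕ Fin n)),
      ↑E' ⊆ (completeBipartiteGraph (Fin m) (Fin n)).edgeSet ∧
      (∀ M ⊆ E', IsMatchingSet M → M.card ≠ r) ∧ E'.card = (r - 1) * m := by
  classical
  set D : Finset (Fin m × Fin n) :=
    (univ : Finset (Fin m)) ×ˢ (univ.filter (fun b : Fin n => (b : ℕ) < r - 1)) with hD
  refine ⟨D.image emb, ?_, ?_, ?_⟩
  · intro e he
    simp only [Finset.coe_image, Set.mem_image, Finset.mem_coe] at he
    obtain ⟨p, -, rfl⟩ := he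
    rw [mem_edgeSet_iff]
    exact ⟨p, rfl⟩
  · intro M hM hmat hcard
    set Q : Finset (Fin m × Fin n) := D.filter (fun p => emb p ∈ M) with hQ
    have hMQ : M = Q.image emb := by
      ext e
      simp only [hQ, mem_image, mem_filter]
      constructor
      · intro he
        obtain ⟨p, hp, rfl⟩ := Finset.mem_image.mp (hM he)
        exact ⟨p, ⟨hp, he⟩, rfl⟩
      · rintro ⟨p, ⟨-, hp⟩, rfl⟩
        exact hp
    have hQcard : Q.card = r := by
      rw [hMQ, Finset.card_image_of_injective _ emb_inj] at hcard
      exact hcard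
    -- second coordinates of Q are injective and lie in the small filter
    have hQle : Q.card ≤ r - 1 := by
      have hmaps : ∀ p ∈ Q, p.2 ∈ univ.filter (fun b : Fin n => (b : ℕ) < r - 1) := by
        intro p hp
        simp only [hQ, hD, mem_filter, Finset.mem_product] at hp
        exact mem_filter.mpr hp.1.2
      have hinj : Set.InjOn (fun p : Fin m × Fin n => p.2) ↑Q := by
        intro p hp q hq hpq2
        simp only [Finset.mem_coe] at hp hq
        by_contra hne
        have hemb : emb p ≠ emb q := fun h => hne (emb_inj h)
        simp only [hQ, mem_filter] at hp hq
        exact hmat (emb p) hp.2 (emb q) hq.2 hemb (Sum.inr p.2)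
          (mem_emb.mpr (Or.inr rfl)) (mem_emb.mpr (Or.inr (congrArg Sum.inr hpq2)))
      have := Finset.card_le_card_of_injOn _ hmaps hinj
      rwa [card_filter_lt (r - 1) (by omega)] at this
    omega
  · rw [Finset.card_image_of_injective _ emb_inj, hD, Finset.card_product,
      Finset.card_univ, Fintype.card_fin, card_filter_lt (r - 1) (by omega), mul_comm]

end Stmt15Aux

open Stmt15Aux in
/-- For m ≥ n ≥ r ≥ 1, ex(K_{m,n}, rK₂) = (r − 1)m. -/
theorem stmt_15 (m n r : ℕ) (hr : 1 ≤ r) (hnr : r ≤ n) (hmn : n ≤ m) :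
    exMatching (completeBipartiteGraph (Fin m) (Fin n)) r = (r - 1) * m := by
  have hub : ∀ k ∈ {k | ∃ E' : Finset (Sym2 (Fin m ⊕ Fin n)),
      ↑E' ⊆ (completeBipartiteGraph (Fin m) (Fin n)).edgeSet ∧
      (∀ M ⊆ E', IsMatchingSet M → M.card ≠ r) ∧ E'.card = k}, k ≤ (r - 1) * m := by
    rintro k ⟨E', hsub, hmat, rfl⟩
    exact upper hr hnr hmn E' hsub hmat
  have hmem : (r - 1) * m ∈ {k | ∃ E' : Finset (Sym2 (Fin m ⊕ Fin n)),
      ↑E' ⊆ (completeBipartiteGraph (Fin m) (Fin n)).edgeSet ∧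
      (∀ M ⊆ E', IsMatchingSet M → M.card ≠ r) ∧ E'.card = k} := lower hr hnr hmn
  exact le_antisymm (csSup_le ⟨_, hmem⟩ hub) (le_csSup ⟨(r - 1) * m, hub⟩ hmem)
end

section
/- Let m, n, r be positive integers with m ≥ n ≥ r. Then χ(KG(K_{m,m}, rK_2)) ≤ χ(KG(K_{m,n}, rK_2)) + (m − n)m. -/
open SimpleGraph

lemma edge_form {α β : Type*} {e : Sym2 (α ⊕ β)}
    (he : e ∈ (completeBipartiteGraph α β).edgeSet) :
    ∃ a b, e = s(Sum.inl a, Sum.inr b) := by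
  induction e using Sym2.ind with
  | _ x y =>
    rw [mem_edgeSet] at he
    rcases x with a | b <;> rcases y with a' | b' <;>
      simp [completeBipartiteGraph] at he
    · exact ⟨a, b', rfl⟩
    · exact ⟨a', b, Sym2.eq_swap⟩

section aux
variable {m n : ℕ} (hn : 0 < n)

/-- the projection map -/
def gmap (m n : ℕ) (hn : 0 < n) : (Fin m ⊕ Fin m) → (Fin m ⊕ Fin n) :=
  Sum.map id (fun b => if h : (b : ℕ) < n then ⟨b, h⟩ else ⟨0, hn⟩)

lemma gmap_inj {x y : Fin m ⊕ Fin m}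
    (hx : ∀ b : Fin m, x = Sum.inr b → (b : ℕ) < n)
    (hy : ∀ b : Fin m, y = Sum.inr b → (b : ℕ) < n)
    (h : gmap m n hn x = gmap m n hn y) : x = y := by
  rcases x with a | b <;> rcases y with a' | b' <;>
    simp [gmap] at h ⊢
  · exact h
  · have hb := hx b rfl
    have hb' := hy b' rfl
    rw [dif_pos hb, dif_pos hb'] at h
    exact Fin.ext (by simpa using h)

lemma gmap_edge_inj {e f : Sym2 (Fin m ⊕ Fin m)}
    (he : ∃ a b : Fin m, e = s(Sum.inl a, Sum.inr b) ∧ (b : ℕ) < n)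
    (hf : ∃ a b : Fin m, f = s(Sum.inl a, Sum.inr b) ∧ (b : ℕ) < n)
    (h : Sym2.map (gmap m n hn) e = Sym2.map (gmap m n hn) f) : e = f := by
  obtain ⟨a, b, rfl, hb⟩ := he
  obtain ⟨a', b', rfl, hb'⟩ := hf
  simp only [Sym2.map_pair_eq, gmap, Sum.map_inl, Sum.map_inr, id] at h
  rw [dif_pos hb, dif_pos hb'] at h
  rw [Sym2.eq_iff] at h
  rcases h with ⟨h1, h2⟩ | ⟨h1, h2⟩
  · rw [Sum.inl.injEq] at h1
    rw [Sum.inr.injEq] at h2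
    have : (b : ℕ) = (b' : ℕ) := by simpa using congrArg Fin.val h2
    rw [h1, Fin.ext this]
  · exact absurd h1 (by simp)

end aux

/-- For m ≥ n ≥ r ≥ 1, χ(KG(K_{m,m}, rK₂)) ≤ χ(KG(K_{m,n}, rK₂)) + (m − n)m. -/
theorem stmt_18 (m n r : ℕ) (hr : 1 ≤ r) (hnr : r ≤ n) (hmn : n ≤ m) :
    (matchingKG (completeBipartiteGraph (Fin m) (Fin m)) r).chromaticNumber
      ≤ (matchingKG (completeBipartiteGraph (Fin m) (Fin n)) r).chromaticNumber
        + (((m - n) * m : ℕ) : ℕ∞) := by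
  classical
  have hn : 0 < n := lt_of_lt_of_le hr hnr
  set G1 := completeBipartiteGraph (Fin m) (Fin n) with hG1
  set G2 := completeBipartiteGraph (Fin m) (Fin m) with hG2
  set K1 := matchingKG G1 r with hK1
  set K2 := matchingKG G2 r with hK2
  -- K1 is colorable with k colors where k = χ(K1)
  haveI : Fintype {M : Finset (Sym2 (Fin m ⊕ Fin n)) //
      ↑M ⊆ G1.edgeSet ∧ IsMatchingSet M ∧ M.card = r} := Fintype.ofFinite _
  have hcol1 : K1.Colorable (Fintype.card _) := K1.colorable_of_fintype
  set k := K1.chromaticNumber.toNat with hk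
  have hχtop : K1.chromaticNumber ≠ ⊤ := by
    intro h
    have := hcol1.chromaticNumber_le
    rw [h] at this
    exact (ENat.coe_lt_top _).not_ge this
  have hkχ : (k : ℕ∞) = K1.chromaticNumber := ENat.coe_toNat hχtop
  have hcolk : K1.Colorable k := colorable_chromaticNumber hcol1
  obtain ⟨C⟩ := hcolk
  -- the bad predicate
  set g := gmap m n hn with hg
  let VT2 := {M : Finset (Sym2 (Fin m ⊕ Fin m)) //
      ↑M ⊆ G2.edgeSet ∧ IsMatchingSet M ∧ M.card = r}
  let bad : VT2 → Prop := fun M =>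
    ∃ p : Fin m × Fin m, s(Sum.inl p.1, Sum.inr p.2) ∈ M.1 ∧ n ≤ (p.2 : ℕ)
  -- structure of edges in a good matching
  have good_edge : ∀ (M : VT2), ¬ bad M → ∀ e ∈ M.1,
      ∃ a b : Fin m, e = s(Sum.inl a, Sum.inr b) ∧ (b : ℕ) < n := by
    intro M hM e he
    obtain ⟨a, b, rfl⟩ := edge_form (M.2.1 he)
    refine ⟨a, b, rfl, ?_⟩
    by_contra hb
    exact hM ⟨(a, b), he, not_lt.mp hb⟩
  -- the map to matchings of K_{m,n}
  have φprop : ∀ (M : VT2), ¬ bad M →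
      ↑(M.1.image (Sym2.map g)) ⊆ G1.edgeSet ∧
      IsMatchingSet (M.1.image (Sym2.map g)) ∧ (M.1.image (Sym2.map g)).card = r := by
    intro M hM
    refine ⟨?_, ?_, ?_⟩
    · intro e' he'
      simp only [Finset.coe_image, Set.mem_image, Finset.mem_coe] at he'
      obtain ⟨e, he, rfl⟩ := he'
      obtain ⟨a, b, rfl, hb⟩ := good_edge M hM e he
      simp only [Sym2.map_pair_eq, mem_edgeSet]
      simp [hG1, completeBipartiteGraph, g, gmap]
    · intro e' he' f' hf' hne v hve hvf
      rw [Finset.mem_image] at he' hf'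
      obtain ⟨e, he, rfl⟩ := he'
      obtain ⟨f, hf, rfl⟩ := hf'
      have hef : e ≠ f := fun h => hne (by rw [h])
      rw [Sym2.mem_map] at hve hvf
      obtain ⟨x, hx, hgx⟩ := hve
      obtain ⟨y, hy, hgy⟩ := hvf
      have hxy : x = y := by
        apply gmap_inj hn _ _ (hgx.trans hgy.symm)
        · intro b hb
          obtain ⟨a, b', heq, hb'⟩ := good_edge M hM e he
          subst heq hb
          rcases Sym2.mem_iff.mp hx with h | h
          · exact absurd h (by simp)
          · rwa [← Sum.inr.injEq .. |>.mp h] at hb'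
        · intro b hb
          obtain ⟨a, b', heq, hb'⟩ := good_edge M hM f hf
          subst heq hb
          rcases Sym2.mem_iff.mp hy with h | h
          · exact absurd h (by simp)
          · rwa [← Sum.inr.injEq .. |>.mp h] at hb'
      exact M.2.2.1 e he f hf hef x hx (hxy ▸ hy)
    · rw [Finset.card_image_of_injOn, M.2.2.2]
      intro e he f hf h
      exact gmap_edge_inj hn (good_edge M hM e he) (good_edge M hM f hf) h
  let φ : ∀ M : VT2, ¬ bad M →
      {M : Finset (Sym2 (Fin m ⊕ Fin n)) //
        ↑M ⊆ G1.edgeSet ∧ IsMatchingSet M ∧ M.card = r} :=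
    fun M hM => ⟨M.1.image (Sym2.map g), φprop M hM⟩
  -- φ sends adjacent good vertices to adjacent vertices
  have φadj : ∀ (M M' : VT2) (hM : ¬ bad M) (hM' : ¬ bad M'),
      K2.Adj M M' → K1.Adj (φ M hM) (φ M' hM') := by
    intro M M' hM hM' ⟨hdisj, _⟩
    have hdisj' : Disjoint (M.1.image (Sym2.map g)) (M'.1.image (Sym2.map g)) := by
      rw [Finset.disjoint_left]
      intro e' he' hf'
      rw [Finset.mem_image] at he' hf'
      obtain ⟨e, he, rfl⟩ := he'
      obtain ⟨f, hf, hfe⟩ := hf'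
      have : f = e := gmap_edge_inj hn (good_edge M' hM' f hf) (good_edge M hM e he) hfe
      subst this
      exact Finset.disjoint_left.mp hdisj he hf
    refine ⟨hdisj', ?_⟩
    intro heq
    have h1 : (φ M hM).1 = (φ M' hM').1 := by rw [heq]
    have h2 : (φ M hM).1 = ∅ := by
      have hd : Disjoint (φ M hM).1 (φ M hM).1 := by
        nth_rewrite 2 [h1]; exact hdisj'
      exact disjoint_self.mp hd
    have : (φ M hM).1.card = r := (φ M hM).2.2.2
    rw [h2] at this
    simp at this
    omega
  -- the coloring of K2
  let col : VT2 → (Fin k ⊕ Fin m × Fin (m - n)) := fun M =>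
    if h : bad M then
      Sum.inr (h.choose.1, ⟨(h.choose.2 : ℕ) - n, by
        have h1 := h.choose_spec.2
        have h2 := h.choose.2.isLt
        omega⟩)
    else Sum.inl (C (φ M h))
  have colvalid : ∀ {M M' : VT2}, K2.Adj M M' → col M ≠ col M' := by
    intro M M' hadj heq
    simp only [col] at heq
    by_cases hM : bad M <;> by_cases hM' : bad M'
    · -- both bad: same chosen edge in both
      rw [dif_pos hM, dif_pos hM'] at heq
      rw [Sum.inr.injEq, Prod.mk.injEq] at heq
      have e1 := hM.choose_spec
      have e2 := hM'.choose_spec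
      have ha : hM.choose.1 = hM'.choose.1 := heq.1
      have hb : hM.choose.2 = hM'.choose.2 := by
        have := congrArg Fin.val heq.2
        simp at this
        have h1 := e1.2; have h2 := e2.2
        exact Fin.ext (by omega)
      have hmem : s(Sum.inl hM.choose.1, Sum.inr hM.choose.2) ∈ M'.1 := by
        rw [ha, hb]; exact e2.1
      exact Finset.disjoint_left.mp hadj.1 e1.1 hmem
    · rw [dif_pos hM, dif_neg hM'] at heq
      exact absurd heq (by simp)
    · rw [dif_neg hM, dif_pos hM'] at heq
      exact absurd heq (by simp)
    · rw [dif_neg hM, dif_neg hM'] at heq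
      rw [Sum.inl.injEq] at heq
      exact C.valid (φadj M M' hM hM' hadj) heq
  let C2 : K2.Coloring (Fin k ⊕ Fin m × Fin (m - n)) := Coloring.mk col colvalid
  have hc2 : K2.Colorable (k + m * (m - n)) := by
    have := C2.colorable
    simpa [Fintype.card_sum, Fintype.card_prod] using this
  have hle := hc2.chromaticNumber_le
  calc K2.chromaticNumber ≤ ((k + m * (m - n) : ℕ) : ℕ∞) := hle
    _ = K1.chromaticNumber + (((m - n) * m : ℕ) : ℕ∞) := by
        rw [← hkχ, Nat.mul_comm m (m - n)]
        push_cast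
        ring
end
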